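/- arXiv:2310.11376 — 5 statements merged into one kernel-verified Lean document; each statement's English description precedes it below -/
import Mathlib

section
/- Let E be a real separable Hilbert space, δ > 0 and t ≥ 0, and let m be a finite Borel measure on the interval [-δ,0]. Let η : [-δ,t] → E be strongly measurable with ∫_{-δ}^{t} ‖η(s)‖_E² ds < ∞, and let λ : [-δ,t] → ℝ be nonnegative and non-increasing. Then ∫_{0}^{t} λ(s) ‖η_δ(s)‖_E² ds ≤ m([-δ,0])² · ∫_{-δ}^{t} λ(s) ‖η(s)‖_E² ds. -/
open MeasureTheory

open scoped ENNReal

/-- Cauchy–Schwarz for lintegrals: `(∫⁻ f)² ≤ μ(univ) · ∫⁻ f²`. -/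
lemma lintegral_sq_le_measure_univ_mul {α : Type*} [MeasurableSpace α] (μ : Measure α)
    {f : α → ℝ≥0∞} (hf : AEMeasurable f μ) :
    (∫⁻ a, f a ∂μ) ^ 2 ≤ μ Set.univ * ∫⁻ a, (f a) ^ 2 ∂μ := by
  have hpq : Real.HolderConjugate 2 2 := Real.HolderConjugate.two_two
  have h := ENNReal.lintegral_mul_le_Lp_mul_Lq μ hpq hf
    (aemeasurable_const : AEMeasurable (fun _ : α => (1 : ℝ≥0∞)) μ)
  simp only [Pi.mul_apply, mul_one, ENNReal.one_rpow, lintegral_const, one_mul] at h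
  have h2 := pow_le_pow_left₀ zero_le h 2
  calc (∫⁻ a, f a ∂μ) ^ 2
      ≤ ((∫⁻ a, f a ^ (2:ℝ) ∂μ) ^ (1/(2:ℝ)) * (μ Set.univ) ^ (1/(2:ℝ))) ^ 2 := h2
    _ = μ Set.univ * ∫⁻ a, (f a) ^ 2 ∂μ := by
        rw [mul_pow, ← ENNReal.rpow_natCast ((∫⁻ a, f a ^ (2:ℝ) ∂μ) ^ (1/(2:ℝ))) 2,
          ← ENNReal.rpow_natCast ((μ Set.univ) ^ (1/(2:ℝ))) 2,
          ← ENNReal.rpow_mul, ← ENNReal.rpow_mul]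
        norm_num
        exact mul_comm _ _


/-- Lemma 3.2 of the paper. For a finite Borel measure `m` supported on
`[-δ, 0]`, an `L²` function `η` on `[-δ, t]` with values in a real separable Hilbert space,
and a nonnegative non-increasing weight `lam`, the delayed moving average
`η_δ(s) = ∫ η(s+r) m(dr)` satisfies
`∫_0^t lam(s) ‖η_δ(s)‖² ds ≤ m([-δ,0])² ∫_{-δ}^t lam(s) ‖η(s)‖² ds`. -/
theorem delayed_moving_average_estimate
    {E : Type*} [NormedAddCommGroup E] [InnerProductSpace ℝ E] [CompleteSpace E]
    [TopologicalSpace.SeparableSpace E]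
    (δ t : ℝ) (hδ : 0 < δ) (ht : 0 ≤ t)
    (m : Measure ℝ) [IsFiniteMeasure m] (hm : m (Set.Icc (-δ) 0)ᶜ = 0)
    (η : ℝ → E)
    (hη_meas : AEStronglyMeasurable η (volume.restrict (Set.Icc (-δ) t)))
    (hη_int : IntegrableOn (fun s => ‖η s‖ ^ 2) (Set.Icc (-δ) t))
    (lam : ℝ → ℝ)
    (hlam_nonneg : ∀ s ∈ Set.Icc (-δ) t, 0 ≤ lam s)
    (hlam_anti : AntitoneOn lam (Set.Icc (-δ) t)) :
    ∫ s in Set.Icc 0 t, lam s * ‖∫ r, η (s + r) ∂m‖ ^ 2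
      ≤ (m (Set.Icc (-δ) 0)).toReal ^ 2 * ∫ s in Set.Icc (-δ) t, lam s * ‖η s‖ ^ 2 := by
  set μ₀ : Measure ℝ := volume.restrict (Set.Icc 0 t) with hμ₀
  set ν : Measure ℝ := volume.restrict (Set.Icc (-δ) t) with hν
  set K : ℝ≥0∞ := m Set.univ with hKdef
  have hK_fin : K ≠ ⊤ := measure_ne_top m _
  have hδt : (-δ : ℝ) ≤ t := by linarith
  have hsub : Set.Icc (0:ℝ) t ⊆ Set.Icc (-δ) t := Set.Icc_subset_Icc (by linarith) le_rfl
  have hμ₀ν : μ₀ = ν.restrict (Set.Icc 0 t) :=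
    (Measure.restrict_restrict_of_subset hsub).symm
  -- `m`-a.e. point lies in `[-δ, 0]`
  have hr_ae : ∀ᵐ r ∂m, r ∈ Set.Icc (-δ) 0 := by
    rw [MeasureTheory.ae_iff]
    exact hm
  -- `m univ = m (Icc (-δ) 0)`
  have hK_eq : K = m (Set.Icc (-δ) 0) := by
    refine le_antisymm ?_ (measure_mono (Set.subset_univ _))
    have h := measure_union_le (μ := m) (Set.Icc (-δ) 0) (Set.Icc (-δ) 0)ᶜ
    rwa [Set.union_compl_self, hm, add_zero] at h
  -- absolute continuity of the pushforward of the product measure under addition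
  have hmap : Measure.map (fun p : ℝ × ℝ => p.1 + p.2) (μ₀.prod m) ≪ ν := by
    refine Measure.AbsolutelyContinuous.mk fun A hA hA0 => ?_
    rw [Measure.map_apply measurable_add hA, Measure.prod_apply_symm (measurable_add hA)]
    rw [hν, Measure.restrict_apply' measurableSet_Icc] at hA0
    have : ∀ᵐ r ∂m, μ₀ ((fun s => (s, r)) ⁻¹' ((fun p : ℝ × ℝ => p.1 + p.2) ⁻¹' A)) = 0 := by
      filter_upwards [hr_ae] with r hr
      rw [hμ₀, Measure.restrict_apply' measurableSet_Icc]
      refine measure_mono_null (fun s hs => ?_)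
        (show volume ((fun s : ℝ => s + r) ⁻¹' (A ∩ Set.Icc (-δ) t)) = 0 by
          rw [measure_preimage_add_right]; exact hA0)
      have h1 : s + r ∈ A := hs.1
      have h2 : s ∈ Set.Icc 0 t := hs.2
      have hle1 : -δ ≤ s + r := by linarith [hr.1, h2.1]
      have hle2 : s + r ≤ t := by linarith [hr.2, h2.2]
      exact ⟨h1, hle1, hle2⟩
    rw [lintegral_congr_ae this, lintegral_zero]
  -- measurability ingredients
  have hη_prod : AEStronglyMeasurable (fun p : ℝ × ℝ => η (p.1 + p.2)) (μ₀.prod m) :=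
    (hη_meas.mono_ac hmap).comp_aemeasurable measurable_add.aemeasurable
  have hlam_ν : AEMeasurable lam ν :=
    aemeasurable_restrict_of_antitoneOn measurableSet_Icc hlam_anti
  have hlam_μ₀ : AEMeasurable lam μ₀ := by
    rw [hμ₀ν]; exact hlam_ν.restrict
  set Ψ : ℝ → ℝ≥0∞ := fun u => ENNReal.ofReal (lam u) * (‖η u‖₊ : ℝ≥0∞) ^ 2 with hΨdef
  have hΨ_ν : AEMeasurable Ψ ν :=
    (ENNReal.measurable_ofReal.comp_aemeasurable hlam_ν).mul (hη_meas.enorm.pow_const 2)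
  have hΨ_prod : AEMeasurable (fun p : ℝ × ℝ => Ψ (p.1 + p.2)) (μ₀.prod m) :=
    (hΨ_ν.mono' hmap).comp_aemeasurable measurable_add.aemeasurable
  -- a.e. sections are measurable
  have hN_prod : AEMeasurable (fun p : ℝ × ℝ => (‖η (p.1 + p.2)‖₊ : ℝ≥0∞)) (μ₀.prod m) :=
    hη_prod.enorm
  have hsec : ∀ᵐ s ∂μ₀, AEMeasurable (fun r => (‖η (s + r)‖₊ : ℝ≥0∞)) m := by
    obtain ⟨g, hg_meas, hg_ae⟩ := hN_prod
    filter_upwards [Measure.ae_ae_of_ae_prod hg_ae] with s hs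
    exact ⟨fun r => g (s, r), hg_meas.comp measurable_prodMk_left, hs⟩
  -- measurability of the moving average
  have hG_meas : AEStronglyMeasurable (fun s => ∫ r, η (s + r) ∂m) μ₀ :=
    hη_prod.integral_prod_right'
  -- nonnegativity of `lam` a.e.
  have hlam0 : ∀ᵐ s ∂μ₀, 0 ≤ lam s := by
    filter_upwards [ae_restrict_mem measurableSet_Icc] with s hs
    exact hlam_nonneg s (hsub hs)
  -- pointwise estimate
  have hpt : ∀ᵐ s ∂μ₀,
      ENNReal.ofReal (lam s * ‖∫ r, η (s + r) ∂m‖ ^ 2) ≤ K * ∫⁻ r, Ψ (s + r) ∂m := by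
    filter_upwards [ae_restrict_mem measurableSet_Icc, hsec] with s hs hsec_s
    have hls : 0 ≤ lam s := hlam_nonneg s (hsub hs)
    have e1 : ENNReal.ofReal (lam s * ‖∫ r, η (s + r) ∂m‖ ^ 2)
        = ENNReal.ofReal (lam s) * (‖∫ r, η (s + r) ∂m‖₊ : ℝ≥0∞) ^ 2 := by
      rw [ENNReal.ofReal_mul hls, ENNReal.ofReal_pow (norm_nonneg _), ofReal_norm, enorm_eq_nnnorm]
    rw [e1]
    have h2 : ((‖∫ r, η (s + r) ∂m‖₊ : ℝ≥0∞)) ^ 2 ≤ K * ∫⁻ r, (‖η (s + r)‖₊ : ℝ≥0∞) ^ 2 ∂m :=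
      le_trans (pow_le_pow_left₀ zero_le (enorm_integral_le_lintegral_enorm _) 2)
        (lintegral_sq_le_measure_univ_mul m hsec_s)
    calc ENNReal.ofReal (lam s) * (‖∫ r, η (s + r) ∂m‖₊ : ℝ≥0∞) ^ 2
        ≤ ENNReal.ofReal (lam s) * (K * ∫⁻ r, (‖η (s + r)‖₊ : ℝ≥0∞) ^ 2 ∂m) :=
          mul_le_mul_right h2 _
      _ = K * (ENNReal.ofReal (lam s) * ∫⁻ r, (‖η (s + r)‖₊ : ℝ≥0∞) ^ 2 ∂m) := by ring
      _ = K * ∫⁻ r, ENNReal.ofReal (lam s) * (‖η (s + r)‖₊ : ℝ≥0∞) ^ 2 ∂m := by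
          rw [lintegral_const_mul' _ _ ENNReal.ofReal_ne_top]
      _ ≤ K * ∫⁻ r, Ψ (s + r) ∂m := by
          refine mul_le_mul_right (lintegral_mono_ae ?_) _
          filter_upwards [hr_ae] with r hr
          have hsr : s + r ∈ Set.Icc (-δ) t :=
            ⟨by linarith [hs.1, hr.1], by linarith [hs.2, hr.2]⟩
          have : lam s ≤ lam (s + r) := hlam_anti hsr (hsub hs) (by linarith [hr.2])
          exact mul_le_mul_left (ENNReal.ofReal_le_ofReal this) _
  -- the key lintegral chain
  have key : ∫⁻ s, ENNReal.ofReal (lam s * ‖∫ r, η (s + r) ∂m‖ ^ 2) ∂μ₀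
      ≤ K ^ 2 * ∫⁻ u, Ψ u ∂ν := by
    calc ∫⁻ s, ENNReal.ofReal (lam s * ‖∫ r, η (s + r) ∂m‖ ^ 2) ∂μ₀
        ≤ ∫⁻ s, K * ∫⁻ r, Ψ (s + r) ∂m ∂μ₀ := lintegral_mono_ae hpt
      _ = K * ∫⁻ s, ∫⁻ r, Ψ (s + r) ∂m ∂μ₀ := lintegral_const_mul' _ _ hK_fin
      _ = K * ∫⁻ r, ∫⁻ s, Ψ (s + r) ∂μ₀ ∂m := by
          rw [lintegral_lintegral_swap hΨ_prod]
      _ ≤ K * ∫⁻ r, (∫⁻ u, Ψ u ∂ν) ∂m := by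
          refine mul_le_mul_right (lintegral_mono_ae ?_) _
          filter_upwards [hr_ae] with r hr
          have hsubr : Set.Icc r (t + r) ⊆ Set.Icc (-δ) t :=
            Set.Icc_subset_Icc hr.1 (by linarith [hr.2])
          have hpre : (fun s : ℝ => s + r) ⁻¹' Set.Icc r (t + r) = Set.Icc 0 t := by
            rw [Set.preimage_add_const_Icc]
            norm_num
          have hmapr : Measure.map (fun s : ℝ => s + r) μ₀
              = volume.restrict (Set.Icc r (t + r)) := by
            rw [hμ₀, ← hpre, ← Measure.restrict_map (measurable_add_const r) measurableSet_Icc,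
              map_add_right_eq_self volume r]
          have hΨr : AEMeasurable Ψ (Measure.map (fun s : ℝ => s + r) μ₀) := by
            rw [hmapr, ← Measure.restrict_restrict_of_subset hsubr]
            exact hΨ_ν.restrict
          calc ∫⁻ s, Ψ (s + r) ∂μ₀
              = ∫⁻ u, Ψ u ∂(Measure.map (fun s : ℝ => s + r) μ₀) :=
                (lintegral_map' hΨr (measurable_add_const r).aemeasurable).symm
            _ = ∫⁻ u in Set.Icc r (t + r), Ψ u ∂volume := by rw [hmapr]
            _ ≤ ∫⁻ u, Ψ u ∂ν := lintegral_mono_set hsubr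
      _ = K * ((∫⁻ u, Ψ u ∂ν) * K) := by rw [lintegral_const]
      _ = K ^ 2 * ∫⁻ u, Ψ u ∂ν := by ring
  -- finiteness of the right-hand lintegral
  have hn2_fin : ∫⁻ u, (‖η u‖₊ : ℝ≥0∞) ^ 2 ∂ν ≠ ⊤ := by
    have h := hη_int.2
    rw [HasFiniteIntegral] at h
    refine ne_of_lt (lt_of_le_of_lt (le_of_eq ?_) h)
    refine lintegral_congr fun u => ?_
    rw [← enorm_eq_nnnorm, ← ofReal_norm, ← ofReal_norm,
      ← ENNReal.ofReal_pow (norm_nonneg _)]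
    congr 1
    rw [norm_pow, norm_norm]
  have hΨ_fin : ∫⁻ u, Ψ u ∂ν ≠ ⊤ := by
    have hbd : ∀ᵐ u ∂ν, Ψ u ≤ ENNReal.ofReal (lam (-δ)) * (‖η u‖₊ : ℝ≥0∞) ^ 2 := by
      filter_upwards [ae_restrict_mem measurableSet_Icc] with u hu
      exact mul_le_mul_left (ENNReal.ofReal_le_ofReal
        (hlam_anti ⟨le_rfl, hδt⟩ hu hu.1)) _
    refine ne_of_lt (lt_of_le_of_lt (lintegral_mono_ae hbd) ?_)
    rw [lintegral_const_mul' _ _ ENNReal.ofReal_ne_top]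
    exact ENNReal.mul_lt_top ENNReal.ofReal_lt_top (lt_top_iff_ne_top.mpr hn2_fin)
  -- rewrite both sides via lintegrals
  have hf_meas : AEStronglyMeasurable (fun s => lam s * ‖∫ r, η (s + r) ∂m‖ ^ 2) μ₀ :=
    (hlam_μ₀.mul (hG_meas.norm.aemeasurable.pow_const 2)).aestronglyMeasurable
  have hf_nonneg : 0 ≤ᵐ[μ₀] fun s => lam s * ‖∫ r, η (s + r) ∂m‖ ^ 2 := by
    filter_upwards [hlam0] with s hs
    exact mul_nonneg hs (pow_nonneg (norm_nonneg _) 2)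
  have hF_meas : AEStronglyMeasurable (fun u => lam u * ‖η u‖ ^ 2) ν :=
    (hlam_ν.mul (hη_meas.norm.aemeasurable.pow_const 2)).aestronglyMeasurable
  have hF_nonneg : 0 ≤ᵐ[ν] fun u => lam u * ‖η u‖ ^ 2 := by
    filter_upwards [ae_restrict_mem measurableSet_Icc] with u hu
    exact mul_nonneg (hlam_nonneg u hu) (pow_nonneg (norm_nonneg _) 2)
  have hRHS : ∫⁻ u, ENNReal.ofReal (lam u * ‖η u‖ ^ 2) ∂ν = ∫⁻ u, Ψ u ∂ν := by
    refine lintegral_congr_ae ?_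
    filter_upwards [ae_restrict_mem measurableSet_Icc] with u hu
    rw [ENNReal.ofReal_mul (hlam_nonneg u hu), ENNReal.ofReal_pow (norm_nonneg _),
      ofReal_norm, enorm_eq_nnnorm]
  rw [show (∫ s in Set.Icc 0 t, lam s * ‖∫ r, η (s + r) ∂m‖ ^ 2) = ∫ s, (fun s => lam s * ‖∫ r, η (s + r) ∂m‖ ^ 2) s ∂μ₀ from rfl,
    integral_eq_lintegral_of_nonneg_ae hf_nonneg hf_meas,
    show (∫ s in Set.Icc (-δ) t, lam s * ‖η s‖ ^ 2) = ∫ u, (fun u => lam u * ‖η u‖ ^ 2) u ∂ν from rfl,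
    integral_eq_lintegral_of_nonneg_ae hF_nonneg hF_meas]
  rw [hRHS]
  have hfin : K ^ 2 * ∫⁻ u, Ψ u ∂ν ≠ ⊤ :=
    ENNReal.mul_ne_top (ENNReal.pow_ne_top hK_fin) hΨ_fin
  calc (∫⁻ s, ENNReal.ofReal (lam s * ‖∫ r, η (s + r) ∂m‖ ^ 2) ∂μ₀).toReal
      ≤ (K ^ 2 * ∫⁻ u, Ψ u ∂ν).toReal := ENNReal.toReal_mono hfin key
    _ = (m (Set.Icc (-δ) 0)).toReal ^ 2 * (∫⁻ u, Ψ u ∂ν).toReal := by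
        rw [ENNReal.toReal_mul, ENNReal.toReal_pow, hK_eq]
end

section
/- Let E be a real separable Hilbert space, δ > 0, T > 0, β ≥ 0, and let m be a finite Borel measure on the interval [-δ,0]. Let X : [-δ,T] → E be strongly measurable with ∫_{-δ}^{T} ‖X(s)‖_E² ds < ∞ and with X(s) = 0 for almost every s ∈ [-δ,0). Then ∫_{0}^{T} e^{-βt} ‖X_δ(t)‖_E² dt ≤ m([-δ,0])² · ∫_{0}^{T} e^{-βt} ‖X(t)‖_E² dt. -/
open MeasureTheory

/-- Cauchy–Schwarz: for a finite measure, `‖∫ f‖² ≤ μ(univ) ∫ ‖f‖²`. -/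
theorem aux_sq_norm_integral_le {α : Type*} {mα : MeasurableSpace α} {F : Type*}
    [NormedAddCommGroup F] [NormedSpace ℝ F]
    (μ : Measure α) [IsFiniteMeasure μ] {f : α → F}
    (hf : AEStronglyMeasurable f μ) (hi : Integrable (fun x => ‖f x‖ ^ 2) μ) :
    ‖∫ x, f x ∂μ‖ ^ 2 ≤ (μ Set.univ).toReal * ∫ x, ‖f x‖ ^ 2 ∂μ := by
  have hf2 : MemLp f 2 μ := (memLp_two_iff_integrable_sq_norm hf).mpr hi
  have hfi : Integrable f μ := hf2.integrable one_le_two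
  have h1 : ‖∫ x, f x ∂μ‖ ≤ ∫ x, ‖f x‖ ∂μ := norm_integral_le_integral_norm f
  have hpq : Real.HolderConjugate 2 2 := Real.holderConjugate_iff.mpr ⟨one_lt_two, by norm_num⟩
  have hmem : MemLp (fun x => ‖f x‖) (ENNReal.ofReal 2) μ := by
    simpa [ENNReal.ofReal_ofNat] using hf2.norm
  have hone : MemLp (fun _ : α => (1 : ℝ)) (ENNReal.ofReal 2) μ := memLp_const 1
  have h2 := integral_mul_le_Lp_mul_Lq_of_nonneg hpq
    (Filter.Eventually.of_forall fun x => norm_nonneg (f x))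
    (Filter.Eventually.of_forall fun _ => zero_le_one) hmem hone
  set A := ∫ x, ‖f x‖ ^ 2 ∂μ with hA
  set B := (μ Set.univ).toReal with hB
  have hA0 : 0 ≤ A := integral_nonneg fun x => sq_nonneg _
  have hB0 : 0 ≤ B := ENNReal.toReal_nonneg
  have h2' : ∫ x, ‖f x‖ ∂μ ≤ Real.sqrt A * Real.sqrt B := by
    have e1 : ∫ x, ‖f x‖ * 1 ∂μ = ∫ x, ‖f x‖ ∂μ := by simp
    have e2 : ∫ x, ‖f x‖ ^ (2 : ℝ) ∂μ = A := by
      simp_rw [Real.rpow_two]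
      rfl
    have e3 : ∫ x, (1 : ℝ) ^ (2 : ℝ) ∂μ = B := by
      simp [Real.one_rpow, hB]
      rfl
    rw [e1, e2, e3] at h2
    calc ∫ x, ‖f x‖ ∂μ ≤ A ^ (1 / (2:ℝ)) * B ^ (1 / (2:ℝ)) := h2
      _ = Real.sqrt A * Real.sqrt B := by
          rw [Real.sqrt_eq_rpow, Real.sqrt_eq_rpow]
  have hintnn : 0 ≤ ∫ x, ‖f x‖ ∂μ := integral_nonneg fun x => norm_nonneg _
  calc ‖∫ x, f x ∂μ‖ ^ 2 ≤ (∫ x, ‖f x‖ ∂μ) ^ 2 := pow_le_pow_left₀ (norm_nonneg _) h1 2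
    _ ≤ (Real.sqrt A * Real.sqrt B) ^ 2 := pow_le_pow_left₀ hintnn h2' 2
    _ = B * A := by rw [mul_pow, Real.sq_sqrt hA0, Real.sq_sqrt hB0, mul_comm]

/-- key contraction estimate from the Appendix proof of Theorem 3.4.
For a finite Borel measure `m` supported on `[-δ, 0]` and an `L²` function `X` on `[-δ, T]`
vanishing a.e. on `[-δ, 0)`, the delayed moving average `X_δ(t) = ∫ X(t+s) m(ds)` satisfies
`∫_0^T e^{-βt} ‖X_δ(t)‖² dt ≤ m([-δ,0])² ∫_0^T e^{-βt} ‖X(t)‖² dt`. -/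
theorem delayed_moving_average_exponential_estimate
    {E : Type*} [NormedAddCommGroup E] [InnerProductSpace ℝ E] [CompleteSpace E]
    [TopologicalSpace.SeparableSpace E]
    (δ T β : ℝ) (hδ : 0 < δ) (hT : 0 < T) (hβ : 0 ≤ β)
    (m : Measure ℝ) [IsFiniteMeasure m] (hm : m (Set.Icc (-δ) 0)ᶜ = 0)
    (X : ℝ → E)
    (hX_meas : AEStronglyMeasurable X (volume.restrict (Set.Icc (-δ) T)))
    (hX_int : IntegrableOn (fun s => ‖X s‖ ^ 2) (Set.Icc (-δ) T))
    (hX_zero : ∀ᵐ s ∂(volume.restrict (Set.Ico (-δ) 0)), X s = 0) :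
    ∫ s in Set.Icc 0 T, Real.exp (-β * s) * ‖∫ r, X (s + r) ∂m‖ ^ 2
      ≤ (m (Set.Icc (-δ) 0)).toReal ^ 2
          * ∫ s in Set.Icc 0 T, Real.exp (-β * s) * ‖X s‖ ^ 2 := by
  classical
  by_cases hm0 : m = 0
  · rw [hm0]
    have h1 : (∫ s in Set.Icc 0 T,
        Real.exp (-β * s) * ‖∫ r, X (s + r) ∂(0 : Measure ℝ)‖ ^ 2) = 0 := by simp
    rw [h1]
    have h2 : ((0 : Measure ℝ) (Set.Icc (-δ) 0)).toReal ^ 2 = 0 := by simp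
    rw [h2, zero_mul]
  -- Step 0: a good measurable representative `W` of `X`
  set Y := hX_meas.mk X with hYdef
  have hY : StronglyMeasurable Y := hX_meas.stronglyMeasurable_mk
  set W : ℝ → E := Set.indicator (Set.Icc 0 T) Y with hWdef
  have hW : StronglyMeasurable W := hY.indicator measurableSet_Icc
  have hWzero : ∀ x, x ∉ Set.Icc 0 T → W x = 0 := fun x hx => Set.indicator_of_notMem hx _
  have hsplit : Set.Ico (-δ) 0 ∪ Set.Icc 0 T = Set.Icc (-δ) T :=
    Set.Ico_union_Icc_eq_Icc (by linarith) hT.le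
  have hXW : X =ᵐ[volume.restrict (Set.Icc (-δ) T)] W := by
    rw [← hsplit]
    have h1 : X =ᵐ[volume.restrict (Set.Ico (-δ) 0)] W := by
      filter_upwards [hX_zero, ae_restrict_mem measurableSet_Ico] with x hx hxm
      rw [hx, hWdef, Set.indicator_of_notMem]
      intro hc
      exact absurd hc.1 (not_le.mpr hxm.2)
    have h2 : X =ᵐ[volume.restrict (Set.Icc 0 T)] W := by
      have hXY : X =ᵐ[volume.restrict (Set.Icc 0 T)] Y :=
        ae_restrict_of_ae_restrict_of_subset (Set.Icc_subset_Icc_left (by linarith))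
          hX_meas.ae_eq_mk
      filter_upwards [hXY, ae_restrict_mem measurableSet_Icc] with x hx hxm
      rw [hx, hWdef, Set.indicator_of_mem hxm]
    have hb : volume.restrict (Set.Ico (-δ) 0 ∪ Set.Icc 0 T) {x | ¬ X x = W x} = 0 := by
      refine le_antisymm ?_ zero_le
      calc volume.restrict (Set.Ico (-δ) 0 ∪ Set.Icc 0 T) {x | ¬ X x = W x}
          ≤ (volume.restrict (Set.Ico (-δ) 0) + volume.restrict (Set.Icc 0 T))
              {x | ¬ X x = W x} :=
            Measure.restrict_union_le _ _ _
        _ = 0 := by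
            rw [Measure.add_apply, ae_iff.mp h1, ae_iff.mp h2, add_zero]
    exact ae_iff.mpr hb
  have hXW0 : X =ᵐ[volume.restrict (Set.Icc 0 T)] W :=
    ae_restrict_of_ae_restrict_of_subset (Set.Icc_subset_Icc_left (by linarith)) hXW
  have hXint0 : IntegrableOn (fun s => ‖X s‖ ^ 2) (Set.Icc 0 T) :=
    hX_int.mono_set (Set.Icc_subset_Icc_left (by linarith))
  have hWint0 : IntegrableOn (fun s => ‖W s‖ ^ 2) (Set.Icc 0 T) := by
    refine hXint0.congr ?_
    filter_upwards [hXW0] with x hx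
    rw [hx]
  set g0 : ℝ → ENNReal := fun u => ENNReal.ofReal (‖W u‖ ^ 2) with hg0def
  have hg0meas : Measurable g0 := (hW.norm.measurable.pow_const 2).ennreal_ofReal
  set I : ℝ := ∫ s in Set.Icc 0 T, Real.exp (-β * s) * ‖W s‖ ^ 2 with hIdef
  have hI0 : 0 ≤ I := integral_nonneg fun s => mul_nonneg (Real.exp_nonneg _) (sq_nonneg _)
  have hIX : (∫ s in Set.Icc 0 T, Real.exp (-β * s) * ‖X s‖ ^ 2) = I := by
    apply integral_congr_ae
    filter_upwards [hXW0] with x hx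
    rw [hx]
  have hIint : IntegrableOn (fun s => Real.exp (-β * s) * ‖W s‖ ^ 2) (Set.Icc 0 T) := by
    refine Integrable.bdd_mul (c := 1) hWint0
      (Real.continuous_exp.comp (continuous_const.mul continuous_id)).aestronglyMeasurable ?_
    filter_upwards [ae_restrict_mem measurableSet_Icc] with s hs
    rw [Real.norm_eq_abs, abs_of_pos (Real.exp_pos _)]
    exact Real.exp_le_one_iff.mpr (by nlinarith [hs.1])
  have hIlin : ENNReal.ofReal I
      = ∫⁻ s in Set.Icc 0 T, ENNReal.ofReal (Real.exp (-β * s)) * g0 s := by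
    rw [hIdef, ofReal_integral_eq_lintegral_ofReal hIint
      (Filter.Eventually.of_forall fun s => mul_nonneg (Real.exp_nonneg _) (sq_nonneg _))]
    exact lintegral_congr fun s => ENNReal.ofReal_mul (Real.exp_nonneg _)
  -- inner substitution estimate
  have hinner : ∀ r ∈ Set.Icc (-δ) 0,
      (∫⁻ s in Set.Icc 0 T, ENNReal.ofReal (Real.exp (-β * s)) * g0 (s + r))
        ≤ ENNReal.ofReal I := by
    intro r hr
    set F : ℝ → ENNReal :=
      (Set.Icc 0 T).indicator (fun s => ENNReal.ofReal (Real.exp (-β * s)) * g0 (s + r))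
      with hFdef
    have e1 : (∫⁻ s in Set.Icc 0 T, ENNReal.ofReal (Real.exp (-β * s)) * g0 (s + r))
        = ∫⁻ u, F u := by
      rw [hFdef]
      exact (lintegral_indicator measurableSet_Icc _).symm
    have e2 : (∫⁻ u, F u) = ∫⁻ u, F (u + -r) := (lintegral_add_right_eq_self F (-r)).symm
    rw [e1, e2]
    have hbd : ∀ u, F (u + -r)
        ≤ (Set.Icc 0 T).indicator (fun u => ENNReal.ofReal (Real.exp (-β * u)) * g0 u) u := by
      intro u
      have hcancel : u + -r + r = u := neg_add_cancel_right u r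
      by_cases hu : u ∈ Set.Icc 0 T
      · rw [Set.indicator_of_mem hu]
        calc F (u + -r)
            ≤ ENNReal.ofReal (Real.exp (-β * (u + -r))) * g0 (u + -r + r) :=
              Set.indicator_le_self _ _ _
          _ = ENNReal.ofReal (Real.exp (-β * (u + -r))) * g0 u := by rw [hcancel]
          _ ≤ ENNReal.ofReal (Real.exp (-β * u)) * g0 u := by
              refine mul_le_mul_left (ENNReal.ofReal_le_ofReal ?_) _
              exact Real.exp_le_exp.mpr (by nlinarith [hr.2])
      · rw [Set.indicator_of_notMem hu]
        have hz : g0 (u + -r + r) = 0 := by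
          rw [hcancel, hg0def]
          simp [hWzero u hu]
        calc F (u + -r)
            ≤ ENNReal.ofReal (Real.exp (-β * (u + -r))) * g0 (u + -r + r) :=
              Set.indicator_le_self _ _ _
          _ = 0 := by rw [hz, mul_zero]
    calc (∫⁻ u, F (u + -r))
        ≤ ∫⁻ u, (Set.Icc 0 T).indicator
            (fun u => ENNReal.ofReal (Real.exp (-β * u)) * g0 u) u := lintegral_mono hbd
      _ = ∫⁻ u in Set.Icc 0 T, ENNReal.ofReal (Real.exp (-β * u)) * g0 u :=
          lintegral_indicator measurableSet_Icc _
      _ = ENNReal.ofReal I := hIlin.symm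
  have hmae : ∀ᵐ r ∂m, r ∈ Set.Icc (-δ) 0 := ae_iff.mpr hm
  -- Tonelli bound
  have hprodmeas : Measurable (Function.uncurry
      fun s r : ℝ => ENNReal.ofReal (Real.exp (-β * s)) * g0 (s + r)) := by
    apply Measurable.mul (f := fun p : ℝ × ℝ => ENNReal.ofReal (Real.exp (-β * p.1)))
      (g := fun p : ℝ × ℝ => g0 (p.1 + p.2))
    · exact (Real.measurable_exp.comp (measurable_fst.const_mul (-β))).ennreal_ofReal
    · exact hg0meas.comp (measurable_fst.add measurable_snd)
  have htot : (∫⁻ s in Set.Icc 0 T, ENNReal.ofReal (Real.exp (-β * s)) * ∫⁻ r, g0 (s + r) ∂m)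
      ≤ m Set.univ * ENNReal.ofReal I := by
    have step1 : ∀ s : ℝ, ENNReal.ofReal (Real.exp (-β * s)) * ∫⁻ r, g0 (s + r) ∂m
        = ∫⁻ r, ENNReal.ofReal (Real.exp (-β * s)) * g0 (s + r) ∂m :=
      fun s => (lintegral_const_mul' _ _ ENNReal.ofReal_ne_top).symm
    simp_rw [step1]
    rw [lintegral_lintegral_swap hprodmeas.aemeasurable]
    calc (∫⁻ r, (∫⁻ s in Set.Icc 0 T, ENNReal.ofReal (Real.exp (-β * s)) * g0 (s + r)) ∂m)
        ≤ ∫⁻ _ , ENNReal.ofReal I ∂m := by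
          apply lintegral_mono_ae
          filter_upwards [hmae] with r hr
          exact hinner r hr
      _ = m Set.univ * ENNReal.ofReal I := by rw [lintegral_const, mul_comm]
  set K : ℝ → ENNReal := fun s => ∫⁻ r, g0 (s + r) ∂m with hKdef
  have hKmeas : Measurable K :=
    Measurable.lintegral_prod_right (hg0meas.comp (measurable_fst.add measurable_snd))
  set G : ℝ → ENNReal :=
    fun s => m Set.univ * (ENNReal.ofReal (Real.exp (-β * s)) * K s) with hGdef
  have hGmeas : Measurable G :=
    measurable_const.mul
      (((Real.measurable_exp.comp (measurable_id.const_mul (-β))).ennreal_ofReal).mul hKmeas)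
  have hGlint : (∫⁻ s in Set.Icc 0 T, G s) ≤ m Set.univ * (m Set.univ * ENNReal.ofReal I) := by
    rw [hGdef]
    rw [lintegral_const_mul' _ _ (measure_ne_top m _)]
    exact mul_le_mul_right htot _
  have hGne : (∫⁻ s in Set.Icc 0 T, G s) ≠ ⊤ := by
    refine (lt_of_le_of_lt hGlint ?_).ne
    exact ENNReal.mul_lt_top (measure_lt_top m _)
      (ENNReal.mul_lt_top (measure_lt_top m _) ENNReal.ofReal_lt_top)
  have hGaelt : ∀ᵐ s ∂volume.restrict (Set.Icc 0 T), G s < ⊤ := ae_lt_top hGmeas hGne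
  have hmuniv0 : m Set.univ ≠ 0 := by
    simpa [Measure.measure_univ_eq_zero] using hm0
  have hKfin : ∀ᵐ s ∂volume.restrict (Set.Icc 0 T), K s < ⊤ := by
    filter_upwards [hGaelt] with s hs
    have h1 : ENNReal.ofReal (Real.exp (-β * s)) * K s < ⊤ :=
      ENNReal.lt_top_of_mul_ne_top_right hs.ne hmuniv0
    exact ENNReal.lt_top_of_mul_ne_top_right h1.ne
      (ENNReal.ofReal_pos.mpr (Real.exp_pos _)).ne' 
  -- Step A : replace X by W inside the m-integral, a.e. in s
  have hbad : volume ({x | ¬ X x = W x} ∩ Set.Icc (-δ) T) = 0 := by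
    have h := ae_iff.mp hXW
    rwa [Measure.restrict_apply' measurableSet_Icc] at h
  set N : Set ℝ := toMeasurable volume ({x | ¬ X x = W x} ∩ Set.Icc (-δ) T) with hNdef
  have hNmeas : MeasurableSet N := measurableSet_toMeasurable _ _
  have hNnull : volume N = 0 := by rw [hNdef, measure_toMeasurable]; exact hbad
  have hsec : ∀ᵐ s ∂(volume : Measure ℝ), m {r | s + r ∈ N} = 0 := by
    have hSmeas : MeasurableSet {p : ℝ × ℝ | p.1 + p.2 ∈ N} :=
      (measurable_fst.add measurable_snd) hNmeas
    have hzero : ((volume : Measure ℝ).prod m) {p : ℝ × ℝ | p.1 + p.2 ∈ N} = 0 := by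
      have hswap : (volume : Measure ℝ).prod m = Measure.map Prod.swap (m.prod volume) :=
        (Measure.prod_swap).symm
      rw [hswap, Measure.map_apply measurable_swap hSmeas]
      have hpre : Prod.swap ⁻¹' {p : ℝ × ℝ | p.1 + p.2 ∈ N} = {p : ℝ × ℝ | p.2 + p.1 ∈ N} :=
        rfl
      have hSmeas' : MeasurableSet {p : ℝ × ℝ | p.2 + p.1 ∈ N} :=
        (measurable_snd.add measurable_fst) hNmeas
      rw [hpre, Measure.prod_apply hSmeas']
      have hfib : ∀ r : ℝ, volume (Prod.mk r ⁻¹' {p : ℝ × ℝ | p.2 + p.1 ∈ N}) = 0 := by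
        intro r
        have : Prod.mk r ⁻¹' {p : ℝ × ℝ | p.2 + p.1 ∈ N} = (fun s => s + r) ⁻¹' N := rfl
        rw [this, measure_preimage_add_right]
        exact hNnull
      have hfib' : ∀ r : ℝ, volume {a : ℝ | a + r ∈ N} = 0 := hfib
      simp [hfib']
    have h := (Measure.measure_prod_null hSmeas).mp hzero
    filter_upwards [h] with s hs
    simpa using hs
  have hXWsec : ∀ᵐ s ∂volume.restrict (Set.Icc 0 T),
      (∫ r, X (s + r) ∂m) = ∫ r, W (s + r) ∂m := by
    filter_upwards [ae_restrict_of_ae hsec, ae_restrict_mem measurableSet_Icc] with s hs hsm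
    apply integral_congr_ae
    have h1 : ∀ᵐ r ∂m, s + r ∉ N := by
      rw [ae_iff]
      simpa using hs
    filter_upwards [h1, hmae] with r hrN hrI
    by_contra hxy
    exact hrN (subset_toMeasurable _ _
      ⟨hxy, ⟨by linarith [hsm.1, hrI.1], by linarith [hsm.2, hrI.2]⟩⟩)
  -- pointwise Cauchy-Schwarz bound
  have hpt : ∀ᵐ s ∂volume.restrict (Set.Icc 0 T),
      Real.exp (-β * s) * ‖∫ r, X (s + r) ∂m‖ ^ 2 ≤ (G s).toReal := by
    filter_upwards [hXWsec, hKfin] with s hXeq hKs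
    rw [hXeq]
    have hmeas' : AEStronglyMeasurable (fun r => W (s + r)) m :=
      (hW.comp_measurable (measurable_id.const_add s)).aestronglyMeasurable
    have hmeas2 : AEStronglyMeasurable (fun r => ‖W (s + r)‖ ^ 2) m :=
      (((hW.norm.measurable.comp (measurable_id.const_add s)).pow_const 2)).aestronglyMeasurable
    have hint' : Integrable (fun r => ‖W (s + r)‖ ^ 2) m := by
      refine ⟨hmeas2, ?_⟩
      rw [hasFiniteIntegral_iff_ofReal (Filter.Eventually.of_forall fun r => sq_nonneg _)]
      exact hKs
    have hcs := aux_sq_norm_integral_le m hmeas' hint'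
    have heq2 : (∫ r, ‖W (s + r)‖ ^ 2 ∂m) = (K s).toReal := by
      rw [integral_eq_lintegral_of_nonneg_ae
        (Filter.Eventually.of_forall fun r => sq_nonneg _) hmeas2]
    rw [heq2] at hcs
    have hGtoReal : (G s).toReal
        = Real.exp (-β * s) * ((m Set.univ).toReal * (K s).toReal) := by
      rw [hGdef]
      simp only [ENNReal.toReal_mul, ENNReal.toReal_ofReal (Real.exp_nonneg _)]
      ring
    rw [hGtoReal]
    exact mul_le_mul_of_nonneg_left hcs (Real.exp_nonneg _)
  -- assemble everything
  have hGint : Integrable (fun s => (G s).toReal) (volume.restrict (Set.Icc 0 T)) :=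
    integrable_toReal_of_lintegral_ne_top hGmeas.aemeasurable hGne
  have step1 : (∫ s in Set.Icc 0 T, Real.exp (-β * s) * ‖∫ r, X (s + r) ∂m‖ ^ 2)
      ≤ ∫ s in Set.Icc 0 T, (G s).toReal :=
    integral_mono_of_nonneg
      (Filter.Eventually.of_forall fun s => mul_nonneg (Real.exp_nonneg _) (sq_nonneg _))
      hGint hpt
  have step2 : (∫ s in Set.Icc 0 T, (G s).toReal) = (∫⁻ s in Set.Icc 0 T, G s).toReal :=
    integral_toReal hGmeas.aemeasurable hGaelt
  have step3 : (∫⁻ s in Set.Icc 0 T, G s).toReal ≤ (m Set.univ).toReal ^ 2 * I := by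
    have h := ENNReal.toReal_mono
      (ENNReal.mul_ne_top (measure_ne_top m _)
        (ENNReal.mul_ne_top (measure_ne_top m _) ENNReal.ofReal_ne_top)) hGlint
    rw [ENNReal.toReal_mul, ENNReal.toReal_mul, ENNReal.toReal_ofReal hI0] at h
    calc (∫⁻ s in Set.Icc 0 T, G s).toReal
        ≤ (m Set.univ).toReal * ((m Set.univ).toReal * I) := h
      _ = (m Set.univ).toReal ^ 2 * I := by ring
  have hmuniv : m Set.univ = m (Set.Icc (-δ) 0) := by
    have h := measure_add_measure_compl (μ := m) (measurableSet_Icc (a := -δ) (b := 0))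
    rw [hm, add_zero] at h
    exact h.symm
  calc (∫ s in Set.Icc 0 T, Real.exp (-β * s) * ‖∫ r, X (s + r) ∂m‖ ^ 2)
      ≤ ∫ s in Set.Icc 0 T, (G s).toReal := step1
    _ = (∫⁻ s in Set.Icc 0 T, G s).toReal := step2
    _ ≤ (m Set.univ).toReal ^ 2 * I := step3
    _ = (m (Set.Icc (-δ) 0)).toReal ^ 2
        * ∫ s in Set.Icc 0 T, Real.exp (-β * s) * ‖X s‖ ^ 2 := by
        rw [hmuniv, hIX]
end

section
/- Let E be a real separable Hilbert space, δ > 0, 0 ≤ t ≤ T, and let m be a finite Borel measure on the interval [-δ,0]. Let ζ : [t,T+δ] → E be strongly measurable with ∫_{t}^{T+δ} ‖ζ(s)‖_E² ds < ∞, and let λ : [t,T+δ] → ℝ be nonnegative and non-decreasing. Then ∫_{t}^{T} λ(s) ‖ζ_{δ+}(s)‖_E² ds ≤ m([-δ,0])² · ∫_{t}^{T+δ} λ(s) ‖ζ(s)‖_E² ds. -/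
open MeasureTheory
open Set
open scoped ENNReal

-- Cauchy-Schwarz for lintegrals
lemma cs_sq {α : Type*} {mα : MeasurableSpace α} (m : Measure α) (f : α → ℝ≥0∞)
    (hf : Measurable f) :
    (∫⁻ r, f r ∂m) ^ 2 ≤ m Set.univ * ∫⁻ r, f r ^ 2 ∂m := by
  have hpq : Real.HolderConjugate 2 2 := ⟨by norm_num, by norm_num, by norm_num⟩
  have h := ENNReal.lintegral_mul_le_Lp_mul_Lq m hpq hf.aemeasurable
    (g := fun _ => (1:ℝ≥0∞)) aemeasurable_const
  simp only [Pi.mul_apply, mul_one, ENNReal.one_rpow, lintegral_const, one_mul] at h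
  calc (∫⁻ r, f r ∂m) ^ 2
      ≤ ((∫⁻ a, f a ^ (2:ℝ) ∂m) ^ ((1:ℝ)/2) * (m Set.univ) ^ ((1:ℝ)/2)) ^ 2 :=
        pow_le_pow_left' h 2
    _ = (∫⁻ a, f a ^ (2:ℝ) ∂m) * m Set.univ := by
        rw [mul_pow, ← ENNReal.rpow_natCast (_ ^ ((1:ℝ)/2)) 2,
          ← ENNReal.rpow_natCast ((m Set.univ) ^ ((1:ℝ)/2)) 2,
          ← ENNReal.rpow_mul, ← ENNReal.rpow_mul]
        norm_num
    _ = m Set.univ * ∫⁻ r, f r ^ 2 ∂m := by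
        rw [mul_comm]
        congr 1
        refine lintegral_congr fun r => ?_
        rw [show ((2:ℝ) = ((2:ℕ):ℝ)) by norm_num, ENNReal.rpow_natCast]

lemma aux_estimate
    {E : Type*} [NormedAddCommGroup E] [InnerProductSpace ℝ E] [CompleteSpace E]
    (δ t T : ℝ) (hδ : 0 < δ) (htT : t ≤ T)
    (m : Measure ℝ) [IsFiniteMeasure m] (hm : m (Set.Icc (-δ) 0)ᶜ = 0)
    (g : ℝ → E) (hg : StronglyMeasurable g)
    (lam : ℝ → ℝ) (hmono : Monotone lam) (hpos : ∀ s, 0 ≤ lam s)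
    (hInt2 : IntegrableOn (fun s => lam s * ‖g s‖ ^ 2) (Set.Icc t (T + δ))) :
    ∫ s in Set.Icc t T, lam s * ‖∫ r, g (s - r) ∂m‖ ^ 2
      ≤ (m (Set.Icc (-δ) 0)).toReal ^ 2
          * ∫ s in Set.Icc t (T + δ), lam s * ‖g s‖ ^ 2 := by
  have hcIcc : m (Set.Icc (-δ) 0) = m Set.univ := by
    refine le_antisymm (measure_mono (subset_univ _)) ?_
    calc m Set.univ = m (Set.Icc (-δ) 0 ∪ (Set.Icc (-δ) 0)ᶜ) := by
          rw [Set.union_compl_self]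
      _ ≤ m (Set.Icc (-δ) 0) + m (Set.Icc (-δ) 0)ᶜ := measure_union_le _ _
      _ = m (Set.Icc (-δ) 0) := by rw [hm, add_zero]
  set c' : ℝ≥0∞ := m Set.univ with hc'
  have hmae : ∀ᵐ r ∂m, r ∈ Set.Icc (-δ) 0 := by
    rw [ae_iff]
    exact hm
  -- basic measurable objects
  have hφ : Measurable fun u => ‖g u‖ := hg.norm.measurable
  set Φ : ℝ → ℝ≥0∞ := fun u => ENNReal.ofReal ‖g u‖ with hΦdef
  have hΦ : Measurable Φ := ENNReal.measurable_ofReal.comp hφ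
  set H : ℝ → ℝ≥0∞ := fun u => ENNReal.ofReal (lam u) * Φ u ^ 2 with hHdef
  have hH : Measurable H :=
    (ENNReal.measurable_ofReal.comp hmono.measurable).mul (hΦ.pow_const 2)
  have hHeq : ∀ u, ENNReal.ofReal (lam u * ‖g u‖ ^ 2) = H u := fun u => by
    rw [hHdef, ENNReal.ofReal_mul (hpos u), ENNReal.ofReal_pow (norm_nonneg _)]
  -- RHS nonneg
  have hRHSnn : 0 ≤ ∫ s in Set.Icc t (T + δ), lam s * ‖g s‖ ^ 2 :=
    setIntegral_nonneg measurableSet_Icc fun s _ => mul_nonneg (hpos s) (sq_nonneg _)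
  by_cases hInt1 : IntegrableOn (fun s => lam s * ‖∫ r, g (s - r) ∂m‖ ^ 2) (Set.Icc t T)
  swap
  · rw [integral_undef hInt1]
    exact mul_nonneg (pow_nonneg ENNReal.toReal_nonneg 2) hRHSnn
  -- key pointwise bound
  have key : ∀ s : ℝ, ENNReal.ofReal (lam s * ‖∫ r, g (s - r) ∂m‖ ^ 2)
      ≤ c' * ∫⁻ r, H (s - r) ∂m := by
    intro s
    have hmeas_r : Measurable fun r : ℝ => Φ (s - r) :=
      hΦ.comp (measurable_const.sub measurable_id)
    have step1 : ENNReal.ofReal ‖∫ r, g (s - r) ∂m‖ ≤ ∫⁻ r, Φ (s - r) ∂m := by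
      rw [ofReal_norm]
      refine (enorm_integral_le_lintegral_enorm _).trans (le_of_eq ?_)
      exact lintegral_congr fun r => (ofReal_norm _).symm
    have step2 : (∫⁻ r, Φ (s - r) ∂m) ^ 2 ≤ c' * ∫⁻ r, Φ (s - r) ^ 2 ∂m :=
      cs_sq m _ hmeas_r
    calc ENNReal.ofReal (lam s * ‖∫ r, g (s - r) ∂m‖ ^ 2)
        = ENNReal.ofReal (lam s) * ENNReal.ofReal ‖∫ r, g (s - r) ∂m‖ ^ 2 := by
          rw [ENNReal.ofReal_mul (hpos s), ENNReal.ofReal_pow (norm_nonneg _)]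
      _ ≤ ENNReal.ofReal (lam s) * (∫⁻ r, Φ (s - r) ∂m) ^ 2 :=
          mul_le_mul_right (pow_le_pow_left' step1 2) _
      _ ≤ ENNReal.ofReal (lam s) * (c' * ∫⁻ r, Φ (s - r) ^ 2 ∂m) :=
          mul_le_mul_right step2 _
      _ = c' * ∫⁻ r, ENNReal.ofReal (lam s) * Φ (s - r) ^ 2 ∂m := by
          rw [lintegral_const_mul _ (hmeas_r.pow_const 2), mul_left_comm]
      _ ≤ c' * ∫⁻ r, H (s - r) ∂m := by
          refine mul_le_mul_right (lintegral_mono_ae ?_) _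
          filter_upwards [hmae] with r hr
          exact mul_le_mul_left
            (ENNReal.ofReal_le_ofReal (hmono (by linarith [hr.2]))) _
  -- translation bound
  have htrans : ∀ r ∈ Set.Icc (-δ) 0,
      ∫⁻ s in Set.Icc t T, H (s - r) ≤ ∫⁻ u in Set.Icc t (T + δ), H u := by
    intro r hr
    have hmp : Measure.map (fun x : ℝ => x - r) volume = volume := by
      simpa [sub_eq_add_neg] using map_add_right_eq_self volume (-r)
    have heq : ∫⁻ s in Set.Icc t T, H (s - r)
        = ∫⁻ u in Set.Icc (t - r) (T - r), H u := by
      conv_rhs => rw [← hmp]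
      rw [setLIntegral_map measurableSet_Icc hH
        (show Measurable fun x : ℝ => x - r from measurable_id.sub measurable_const)]
      congr 1
      ext x
      simp [sub_le_sub_iff_right]
    rw [heq]
    exact lintegral_mono_set (Set.Icc_subset_Icc (by linarith [hr.2]) (by linarith [hr.1]))
  -- measurability of inner integral
  have hmeas_inner : Measurable fun s : ℝ => ∫⁻ r, H (s - r) ∂m :=
    Measurable.lintegral_prod_right (f := fun s r => H (s - r))
      (hH.comp (measurable_fst.sub measurable_snd))
  set J : ℝ≥0∞ := ∫⁻ s in Set.Icc t (T + δ), ENNReal.ofReal (lam s * ‖g s‖ ^ 2) with hJdef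
  have hJH : J = ∫⁻ u in Set.Icc t (T + δ), H u := lintegral_congr fun u => hHeq u
  have hJtop : J ≠ ⊤ := by
    have : J = ∫⁻ s in Set.Icc t (T + δ), ‖lam s * ‖g s‖ ^ 2‖ₑ :=
      lintegral_congr fun s =>
        (Real.enorm_eq_ofReal (mul_nonneg (hpos s) (sq_nonneg _))).symm
    rw [this]
    exact hInt2.2.ne
  -- main chain
  have main : ∫⁻ s in Set.Icc t T, ENNReal.ofReal (lam s * ‖∫ r, g (s - r) ∂m‖ ^ 2)
      ≤ c' ^ 2 * J := by
    calc ∫⁻ s in Set.Icc t T, ENNReal.ofReal (lam s * ‖∫ r, g (s - r) ∂m‖ ^ 2)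
        ≤ ∫⁻ s in Set.Icc t T, c' * ∫⁻ r, H (s - r) ∂m := lintegral_mono fun s => key s
      _ = c' * ∫⁻ s in Set.Icc t T, ∫⁻ r, H (s - r) ∂m :=
          lintegral_const_mul _ hmeas_inner
      _ = c' * ∫⁻ r, ∫⁻ s in Set.Icc t T, H (s - r) ∂volume ∂m := by
          have hunc : AEMeasurable (Function.uncurry fun (s r : ℝ) => H (s - r))
              ((volume.restrict (Set.Icc t T)).prod m) :=
            (hH.comp (measurable_fst.sub measurable_snd)).aemeasurable
          rw [lintegral_lintegral_swap hunc]
      _ ≤ c' * ∫⁻ _, J ∂m := by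
          refine mul_le_mul_right (lintegral_mono_ae ?_) _
          filter_upwards [hmae] with r hr
          rw [hJH]
          exact htrans r hr
      _ = c' ^ 2 * J := by rw [lintegral_const]; ring
  -- convert back to real integrals
  rw [integral_eq_lintegral_of_nonneg_ae
      (Filter.Eventually.of_forall fun s => mul_nonneg (hpos s) (sq_nonneg _))
      hInt1.aestronglyMeasurable,
    integral_eq_lintegral_of_nonneg_ae
      (Filter.Eventually.of_forall fun s => mul_nonneg (hpos s) (sq_nonneg _))
      hInt2.aestronglyMeasurable]
  have hfin : c' ^ 2 * J ≠ ⊤ :=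
    ENNReal.mul_ne_top (ENNReal.pow_ne_top (measure_ne_top m _)) hJtop
  calc (∫⁻ s in Set.Icc t T, ENNReal.ofReal (lam s * ‖∫ r, g (s - r) ∂m‖ ^ 2)).toReal
      ≤ (c' ^ 2 * J).toReal := ENNReal.toReal_mono hfin main
    _ = (m (Set.Icc (-δ) 0)).toReal ^ 2 * J.toReal := by
        rw [ENNReal.toReal_mul, ENNReal.toReal_pow, hcIcc]


/-- Lemma 3.6 of the paper. For a finite Borel measure `m` supported on
`[-δ, 0]`, an `L²` function `ζ` on `[t, T+δ]` with values in a real separable Hilbert space,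
and a nonnegative non-decreasing weight `lam`, the anticipated moving average
`ζ_{δ+}(s) = ∫ ζ(s-r) m(dr)` satisfies
`∫_t^T lam(s) ‖ζ_{δ+}(s)‖² ds ≤ m([-δ,0])² ∫_t^{T+δ} lam(s) ‖ζ(s)‖² ds`. -/
theorem anticipated_moving_average_estimate
    {E : Type*} [NormedAddCommGroup E] [InnerProductSpace ℝ E] [CompleteSpace E]
    [TopologicalSpace.SeparableSpace E]
    (δ t T : ℝ) (hδ : 0 < δ) (ht : 0 ≤ t) (htT : t ≤ T)
    (m : Measure ℝ) [IsFiniteMeasure m] (hm : m (Set.Icc (-δ) 0)ᶜ = 0)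
    (ζ : ℝ → E)
    (hζ_meas : AEStronglyMeasurable ζ (volume.restrict (Set.Icc t (T + δ))))
    (hζ_int : IntegrableOn (fun s => ‖ζ s‖ ^ 2) (Set.Icc t (T + δ)))
    (lam : ℝ → ℝ)
    (hlam_nonneg : ∀ s ∈ Set.Icc t (T + δ), 0 ≤ lam s)
    (hlam_mono : MonotoneOn lam (Set.Icc t (T + δ))) :
    ∫ s in Set.Icc t T, lam s * ‖∫ r, ζ (s - r) ∂m‖ ^ 2
      ≤ (m (Set.Icc (-δ) 0)).toReal ^ 2
          * ∫ s in Set.Icc t (T + δ), lam s * ‖ζ s‖ ^ 2 := by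
  have htTδ : t ≤ T + δ := by linarith
  -- monotone extension of lam
  set clamp : ℝ → ℝ := fun s => max t (min s (T + δ)) with hclampdef
  have hclamp_mono : Monotone clamp :=
    monotone_const.max ((monotone_id.min monotone_const))
  have hclamp_mem : ∀ s, clamp s ∈ Set.Icc t (T + δ) := fun s =>
    ⟨le_max_left _ _, max_le htTδ (min_le_right _ _)⟩
  have hclamp_eq : ∀ s ∈ Set.Icc t (T + δ), clamp s = s := fun s hs => by
    rw [hclampdef]
    simp only [min_eq_left hs.2, max_eq_right hs.1]
  set lam' : ℝ → ℝ := fun s => lam (clamp s) with hlam'def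
  have hlam'_mono : Monotone lam' := fun a b hab =>
    hlam_mono (hclamp_mem a) (hclamp_mem b) (hclamp_mono hab)
  have hlam'_pos : ∀ s, 0 ≤ lam' s := fun s => hlam_nonneg _ (hclamp_mem s)
  have hlam'_bdd : ∀ s, lam' s ≤ lam (T + δ) := fun s =>
    hlam_mono (hclamp_mem s) ⟨htTδ, le_refl _⟩ (hclamp_mem s).2
  have hlam'_eq : ∀ s ∈ Set.Icc t (T + δ), lam' s = lam s := fun s hs => by
    rw [hlam'def]; simp only [hclamp_eq s hs]
  -- measurable representative
  obtain ⟨g, hg_sm, hζg⟩ := hζ_meas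
  have hg_int : IntegrableOn (fun s => ‖g s‖ ^ 2) (Set.Icc t (T + δ)) := by
    refine hζ_int.congr ?_
    filter_upwards [hζg] with s hs
    rw [hs]
  -- integrability of lam' * ‖g‖²
  have hInt2 : IntegrableOn (fun s => lam' s * ‖g s‖ ^ 2) (Set.Icc t (T + δ)) := by
    refine Integrable.mono' (hg_int.const_mul (lam (T + δ))) ?_ ?_
    · exact (hlam'_mono.measurable.aestronglyMeasurable).mul
        ((hg_sm.norm.measurable.pow_const 2).aestronglyMeasurable)
    · refine Filter.Eventually.of_forall fun s => ?_
      rw [Real.norm_eq_abs, abs_of_nonneg (mul_nonneg (hlam'_pos s) (sq_nonneg _))]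
      exact mul_le_mul_of_nonneg_right (hlam'_bdd s) (sq_nonneg _)
  -- RHS equality
  have hRHS : ∫ s in Set.Icc t (T + δ), lam s * ‖ζ s‖ ^ 2
      = ∫ s in Set.Icc t (T + δ), lam' s * ‖g s‖ ^ 2 := by
    refine integral_congr_ae ?_
    filter_upwards [hζg, ae_restrict_mem measurableSet_Icc] with s hs hmem
    rw [hs, hlam'_eq s hmem]
  -- the exceptional null set
  set N0 : Set ℝ := {x | ζ x ≠ g x} ∩ Set.Icc t (T + δ) with hN0def
  have hN0 : volume N0 = 0 := by
    have h1 : (volume.restrict (Set.Icc t (T + δ))) {x | ζ x ≠ g x} = 0 := hζg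
    rwa [Measure.restrict_apply' measurableSet_Icc] at h1
  set N : Set ℝ := toMeasurable volume N0 with hNdef
  have hNmeas : MeasurableSet N := measurableSet_toMeasurable _ _
  have hNvol : volume N = 0 := by rw [hNdef, measure_toMeasurable]; exact hN0
  have hN0N : N0 ⊆ N := subset_toMeasurable _ _
  -- Claim A : for a.e. s, m {r | s - r ∈ N} = 0
  have hind : Measurable (Function.uncurry fun (s r : ℝ) =>
      N.indicator (fun _ => (1 : ℝ≥0∞)) (s - r)) :=
    (measurable_one.indicator hNmeas).comp (measurable_fst.sub measurable_snd)
  have hmeasF : Measurable fun s : ℝ =>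
      ∫⁻ r, N.indicator (fun _ => (1 : ℝ≥0∞)) (s - r) ∂m :=
    Measurable.lintegral_prod_right (f := fun s r =>
      N.indicator (fun _ => (1 : ℝ≥0∞)) (s - r)) hind
  have hzero : ∫⁻ s, ∫⁻ r, N.indicator (fun _ => (1 : ℝ≥0∞)) (s - r) ∂m ∂volume = 0 := by
    rw [lintegral_lintegral_swap hind.aemeasurable]
    have hr0 : ∀ r : ℝ, ∫⁻ s, N.indicator (fun _ => (1 : ℝ≥0∞)) (s - r) ∂volume = 0 := by
      intro r
      have hmp : Measure.map (fun x : ℝ => x - r) volume = volume := by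
        simpa [sub_eq_add_neg] using map_add_right_eq_self volume (-r)
      calc ∫⁻ s, N.indicator (fun _ => (1 : ℝ≥0∞)) (s - r) ∂volume
          = ∫⁻ y, N.indicator (fun _ => (1 : ℝ≥0∞)) y
              ∂(Measure.map (fun x : ℝ => x - r) volume) :=
            (lintegral_map (measurable_one.indicator hNmeas)
              (show Measurable fun x : ℝ => x - r from
                measurable_id.sub measurable_const)).symm
        _ = 0 := by
            rw [hmp, lintegral_indicator hNmeas, setLIntegral_one, hNvol]
    simp only [hr0, lintegral_zero]
  have claimA : ∀ᵐ s : ℝ ∂volume, m {r | s - r ∈ N} = 0 := by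
    have hae : ∀ᵐ s : ℝ ∂volume,
        ∫⁻ r, N.indicator (fun _ => (1 : ℝ≥0∞)) (s - r) ∂m = 0 := by
      have := (lintegral_eq_zero_iff hmeasF).mp hzero
      filter_upwards [this] with s hs
      simpa using hs
    filter_upwards [hae] with s hs
    have heq : (fun r : ℝ => N.indicator (fun _ => (1 : ℝ≥0∞)) (s - r))
        = ({r : ℝ | s - r ∈ N}).indicator (fun _ => (1 : ℝ≥0∞)) := by
      ext r
      by_cases h : s - r ∈ N <;> simp [Set.indicator, h]
    have hset : MeasurableSet {r : ℝ | s - r ∈ N} :=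
      (show Measurable fun r : ℝ => s - r from measurable_const.sub measurable_id) hNmeas
    have h2 : ∫⁻ r, ({r : ℝ | s - r ∈ N}).indicator (fun _ => (1 : ℝ≥0∞)) r ∂m
        = ∫⁻ r, N.indicator (fun _ => (1 : ℝ≥0∞)) (s - r) ∂m :=
      lintegral_congr fun r => by by_cases h : s - r ∈ N <;> simp [Set.indicator, h]
    calc m {r | s - r ∈ N} = ∫⁻ _ in {r : ℝ | s - r ∈ N}, 1 ∂m := (setLIntegral_one _).symm
      _ = ∫⁻ r, ({r : ℝ | s - r ∈ N}).indicator (fun _ => (1 : ℝ≥0∞)) r ∂m :=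
          (lintegral_indicator hset _).symm
      _ = ∫⁻ r, N.indicator (fun _ => (1 : ℝ≥0∞)) (s - r) ∂m := h2
      _ = 0 := hs
  -- LHS equality
  have hmae : ∀ᵐ r ∂m, r ∈ Set.Icc (-δ) 0 := by rw [ae_iff]; exact hm
  have hLHS : ∫ s in Set.Icc t T, lam s * ‖∫ r, ζ (s - r) ∂m‖ ^ 2
      = ∫ s in Set.Icc t T, lam' s * ‖∫ r, g (s - r) ∂m‖ ^ 2 := by
    refine integral_congr_ae ?_
    filter_upwards [ae_restrict_mem measurableSet_Icc,
      ae_restrict_of_ae (μ := volume) (s := Set.Icc t T) claimA] with s hmem hsN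
    have hmemδ : s ∈ Set.Icc t (T + δ) := ⟨hmem.1, by linarith [hmem.2]⟩
    have hint_eq : ∫ r, ζ (s - r) ∂m = ∫ r, g (s - r) ∂m := by
      refine integral_congr_ae ?_
      have hNae : ∀ᵐ r ∂m, s - r ∉ N := by
        rw [ae_iff]
        simpa [not_not] using hsN
      filter_upwards [hmae, hNae] with r hr hrN
      by_contra hne
      exact hrN (hN0N ⟨hne, ⟨by linarith [hmem.1, hr.2], by linarith [hmem.2, hr.1]⟩⟩)
    rw [hint_eq, hlam'_eq s hmemδ]
  rw [hLHS, hRHS]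
  exact aux_estimate δ t T hδ htT m hm g hg_sm lam' hlam'_mono hlam'_pos hInt2
end

section
/- Let E be a real separable Hilbert space, δ > 0, 0 ≤ t ≤ T, and let m be a finite Borel measure on the interval [-δ,0]. Let ζ : [t,T+δ] → E be strongly measurable with ∫_{t}^{T+δ} ‖ζ(s)‖_E² ds < ∞ and with ζ(s) = 0 for almost every s ∈ (T, T+δ], and let λ : [t,T] → ℝ be nonnegative and non-decreasing. Then ∫_{t}^{T} λ(s) ‖ζ_{δ+}(s)‖_E² ds ≤ m([-δ,0])² · ∫_{t}^{T} λ(s) ‖ζ(s)‖_E² ds. -/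
open MeasureTheory

open scoped ENNReal

/-- Cauchy–Schwarz for lower integrals: `(∫⁻ f)² ≤ m(univ) * ∫⁻ f²`. -/
lemma sq_lintegral_le_measure_univ_mul {α : Type*} [MeasurableSpace α] (m : Measure α)
    (f : α → ℝ≥0∞) (hf : AEMeasurable f m) :
    (∫⁻ x, f x ∂m) ^ 2 ≤ m Set.univ * ∫⁻ x, f x ^ 2 ∂m := by
  have hpq : (2:ℝ).HolderConjugate 2 := Real.HolderConjugate.two_two
  have h := ENNReal.lintegral_mul_le_Lp_mul_Lq m hpq hf
    (aemeasurable_const (b := (1:ℝ≥0∞)))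
  simp only [Pi.mul_apply, mul_one, ENNReal.one_rpow, lintegral_const, one_mul] at h
  have h2 : ∀ x : ℝ≥0∞, x ^ (2:ℝ) = x ^ 2 := fun x => by
    rw [← ENNReal.rpow_natCast x 2]; norm_num
  have key : ((∫⁻ x, f x ^ (2:ℝ) ∂m) ^ (1/2:ℝ) * (m Set.univ) ^ (1/2:ℝ)) ^ 2
      = (∫⁻ x, f x ^ (2:ℝ) ∂m) * m Set.univ := by
    rw [mul_pow, ← h2 ((∫⁻ x, f x ^ (2:ℝ) ∂m) ^ (1/2:ℝ)), ← h2 ((m Set.univ) ^ (1/2:ℝ)),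
      ← ENNReal.rpow_mul, ← ENNReal.rpow_mul]
    norm_num
  calc (∫⁻ x, f x ∂m) ^ 2
      ≤ ((∫⁻ x, f x ^ (2:ℝ) ∂m) ^ (1/2:ℝ) * (m Set.univ) ^ (1/2:ℝ)) ^ 2 := by
        gcongr
    _ = (∫⁻ x, f x ^ (2:ℝ) ∂m) * m Set.univ := key
    _ = m Set.univ * ∫⁻ x, f x ^ 2 ∂m := by
        rw [mul_comm]; congr 1; exact lintegral_congr fun x => h2 _

/-- vanishing-terminal version of the anticipated delay estimate, used in the
a priori estimates for anticipated BSEEs. If moreover `ζ` vanishes a.e. on `(T, T+δ]`, then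
the anticipated moving average `ζ_{δ+}(s) = ∫ ζ(s-r) m(dr)` satisfies
`∫_t^T lam(s) ‖ζ_{δ+}(s)‖² ds ≤ m([-δ,0])² ∫_t^T lam(s) ‖ζ(s)‖² ds`. -/
theorem anticipated_moving_average_estimate_vanishing_terminal
    {E : Type*} [NormedAddCommGroup E] [InnerProductSpace ℝ E] [CompleteSpace E]
    [TopologicalSpace.SeparableSpace E]
    (δ t T : ℝ) (hδ : 0 < δ) (ht : 0 ≤ t) (htT : t ≤ T)
    (m : Measure ℝ) [IsFiniteMeasure m] (hm : m (Set.Icc (-δ) 0)ᶜ = 0)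
    (ζ : ℝ → E)
    (hζ_meas : AEStronglyMeasurable ζ (volume.restrict (Set.Icc t (T + δ))))
    (hζ_int : IntegrableOn (fun s => ‖ζ s‖ ^ 2) (Set.Icc t (T + δ)))
    (hζ_zero : ∀ᵐ s ∂(volume.restrict (Set.Ioc T (T + δ))), ζ s = 0)
    (lam : ℝ → ℝ)
    (hlam_nonneg : ∀ s ∈ Set.Icc t T, 0 ≤ lam s)
    (hlam_mono : MonotoneOn lam (Set.Icc t T)) :
    ∫ s in Set.Icc t T, lam s * ‖∫ r, ζ (s - r) ∂m‖ ^ 2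
      ≤ (m (Set.Icc (-δ) 0)).toReal ^ 2
          * ∫ s in Set.Icc t T, lam s * ‖ζ s‖ ^ 2 := by
  classical
  obtain ⟨g, hg_sm, hg_ae⟩ := hζ_meas
  set A : Set ℝ := Set.Icc t T with hAdef
  have hAmeas : MeasurableSet A := measurableSet_Icc
  set ζ' : ℝ → E := A.indicator g with hζ'def
  have hζ'_sm : StronglyMeasurable ζ' := hg_sm.indicator hAmeas
  have hζ'_out : ∀ u, u ∉ A → ζ' u = 0 := fun u hu => Set.indicator_of_notMem hu g
  have hTδ : T ≤ T + δ := by linarith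
  have hsubset : A ⊆ Set.Icc t (T + δ) := Set.Icc_subset_Icc le_rfl hTδ
  -- ζ = ζ' a.e. on A
  have h1 : ζ =ᵐ[volume.restrict A] ζ' := by
    have hgA : ∀ᵐ u ∂volume.restrict A, ζ u = g u :=
      ae_restrict_of_ae_restrict_of_subset hsubset hg_ae
    filter_upwards [hgA, ae_restrict_mem hAmeas] with u hu hmem
    rw [hu, hζ'def, Set.indicator_of_mem hmem]
  have h2 : ζ =ᵐ[volume.restrict (Set.Ioc T (T + δ))] ζ' := by
    filter_upwards [hζ_zero, ae_restrict_mem measurableSet_Ioc] with u hu hmem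
    rw [hu, hζ'_out u (fun h => absurd h.2 (not_le.mpr hmem.1))]
  have h3 : ζ =ᵐ[volume.restrict (Set.Icc t (T + δ))] ζ' := by
    have hsub : volume.restrict (Set.Icc t (T + δ))
        ≤ volume.restrict A + volume.restrict (Set.Ioc T (T + δ)) := by
      refine le_trans (Measure.restrict_mono (fun x hx => ?_) le_rfl)
        (Measure.restrict_union_le _ _)
      rcases le_or_gt x T with h | h
      · exact Or.inl ⟨hx.1, h⟩
      · exact Or.inr ⟨h, hx.2⟩
    exact ((ae_add_measure_iff).mpr ⟨h1, h2⟩).filter_mono (ae_mono hsub)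
  -- a measurable null superset of the exceptional set
  have hB : volume ({u | ζ u ≠ ζ' u} ∩ Set.Icc t (T + δ)) = 0 := by
    have h3' : ∀ᵐ u ∂volume.restrict (Set.Icc t (T + δ)), ζ u = ζ' u := h3
    rw [ae_iff, Measure.restrict_apply' measurableSet_Icc] at h3'
    simpa using h3'
  set N : Set ℝ := toMeasurable volume ({u | ζ u ≠ ζ' u} ∩ Set.Icc t (T + δ)) with hNdef
  have hNmeas : MeasurableSet N := measurableSet_toMeasurable _ _
  have hN0 : volume N = 0 := by rw [hNdef, measure_toMeasurable]; exact hB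
  have hNkey : ∀ u ∈ Set.Icc t (T + δ), u ∉ N → ζ u = ζ' u := by
    intro u hu hnot
    by_contra hne
    exact hnot (subset_toMeasurable _ _ ⟨hne, hu⟩)
  -- monotone extension of lam
  have hTmem : T ∈ Set.Icc t T := ⟨htT, le_rfl⟩
  set lam' : ℝ → ℝ := fun s => lam (min (max s t) T) with hlam'def
  have hproj_mem : ∀ s, min (max s t) T ∈ Set.Icc t T :=
    fun s => ⟨le_min (le_max_right _ _) htT, min_le_right _ _⟩
  have hlam'_mono : Monotone lam' := fun a b hab =>
    hlam_mono (hproj_mem a) (hproj_mem b) (min_le_min (max_le_max hab le_rfl) le_rfl)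
  have hlam'_eq : ∀ s ∈ Set.Icc t T, lam' s = lam s := by
    intro s hs
    rw [hlam'def]
    simp only [max_eq_left hs.1, min_eq_left hs.2]
  have hlam'_nonneg : ∀ s, 0 ≤ lam' s := fun s => hlam_nonneg _ (hproj_mem s)
  have hlam'_le : ∀ s, lam' s ≤ lam T := fun s => hlam_mono (hproj_mem s) hTmem (min_le_right _ _)
  have hlam'_meas : Measurable lam' := hlam'_mono.measurable
  -- m is carried by [-δ, 0]
  have hm_ae : ∀ᵐ r ∂m, r ∈ Set.Icc (-δ) 0 := by
    have h := measure_eq_zero_iff_ae_notMem.mp hm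
    filter_upwards [h] with r hr
    simpa using hr
  -- a.e. s, m-a.e. r avoids N
  have hA0 : ∀ᵐ s ∂volume.restrict A, m {r | s - r ∈ N} = 0 := by
    have hmeasfun : Measurable fun s => m {r | s - r ∈ N} := by
      have hset : MeasurableSet {p : ℝ × ℝ | p.1 - p.2 ∈ N} :=
        (measurable_fst.sub measurable_snd) hNmeas
      exact measurable_measure_prodMk_left hset
    have hzero : ∫⁻ s in A, m {r | s - r ∈ N} ∂volume = 0 := by
      refine nonpos_iff_eq_zero.mp ?_
      have hswap : ∫⁻ s in A, ∫⁻ r, N.indicator 1 (s - r) ∂m ∂volume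
          = ∫⁻ r, ∫⁻ s in A, N.indicator 1 (s - r) ∂volume ∂m := by
        apply lintegral_lintegral_swap
        exact ((measurable_one.indicator hNmeas).comp
          (measurable_fst.sub measurable_snd)).aemeasurable
      calc ∫⁻ s in A, m {r | s - r ∈ N} ∂volume
          = ∫⁻ s in A, ∫⁻ r, N.indicator 1 (s - r) ∂m ∂volume := by
            refine lintegral_congr fun s => ?_
            have hset_s : MeasurableSet {r : ℝ | s - r ∈ N} :=
              (measurable_const.sub measurable_id) hNmeas
            rw [← lintegral_indicator_one hset_s]
            exact lintegral_congr fun r => by simp [Set.indicator_apply]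
        _ = ∫⁻ r, ∫⁻ s in A, N.indicator 1 (s - r) ∂volume ∂m := hswap
        _ ≤ ∫⁻ r, ∫⁻ s, N.indicator 1 (s - r) ∂volume ∂m :=
            lintegral_mono fun r => setLIntegral_le_lintegral _ _
        _ = ∫⁻ r, volume N ∂m := by
            refine lintegral_congr fun r => ?_
            rw [lintegral_sub_right_eq_self (fun s => N.indicator 1 s) r]
            exact lintegral_indicator_one hNmeas
        _ = 0 := by simp [hN0]
        _ ≤ 0 := le_rfl
    have := (lintegral_eq_zero_iff hmeasfun).mp hzero
    filter_upwards [this] with s hs using hs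
  -- a.e. equality of the moving averages
  have hcongr_int : ∀ᵐ s ∂volume.restrict A,
      (∫ r, ζ (s - r) ∂m) = ∫ r, ζ' (s - r) ∂m := by
    filter_upwards [hA0, ae_restrict_mem hAmeas] with s hs hsA
    refine integral_congr_ae ?_
    have hrN : ∀ᵐ r ∂m, s - r ∉ N := by
      rw [ae_iff]; simpa using hs
    filter_upwards [hm_ae, hrN] with r hr hrN'
    have hsA' : t ≤ s ∧ s ≤ T := hsA
    have hr' : -δ ≤ r ∧ r ≤ 0 := hr
    exact hNkey (s - r) (Set.mem_Icc.mpr ⟨by linarith [hsA'.1, hr'.2], by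
      linarith [hsA'.2, hr'.1]⟩) hrN'
  -- measurability facts
  have h_unc : StronglyMeasurable (fun p : ℝ × ℝ => ζ' (p.1 - p.2)) :=
    hζ'_sm.comp_measurable (measurable_fst.sub measurable_snd)
  have h_avg_sm : StronglyMeasurable (fun s => ∫ r, ζ' (s - r) ∂m) :=
    h_unc.integral_prod_right'
  have h_nn : ∀ x : E, ENNReal.ofReal (‖x‖ ^ 2) = (‖x‖₊ : ℝ≥0∞) ^ 2 := fun x => by
    rw [ENNReal.ofReal_pow (norm_nonneg x), ofReal_norm, enorm_eq_nnnorm]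
  set L : ℝ≥0∞ := ∫⁻ u in A, ENNReal.ofReal (lam' u) * (‖ζ' u‖₊ : ℝ≥0∞) ^ 2 ∂volume
    with hLdef
  -- translation estimate, for each delay r ≤ 0
  have hE : ∀ r : ℝ, r ≤ 0 →
      (∫⁻ s in A, ENNReal.ofReal (lam' s) * (‖ζ' (s - r)‖₊ : ℝ≥0∞) ^ 2 ∂volume) ≤ L := by
    intro r hr
    rw [hLdef, ← lintegral_indicator hAmeas, ← lintegral_indicator hAmeas]
    have htrans : ∫⁻ s, A.indicator
          (fun s => ENNReal.ofReal (lam' s) * (‖ζ' (s - r)‖₊ : ℝ≥0∞) ^ 2) s ∂volume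
        = ∫⁻ u, A.indicator
          (fun s => ENNReal.ofReal (lam' s) * (‖ζ' (s - r)‖₊ : ℝ≥0∞) ^ 2) (u + r) ∂volume :=
      (lintegral_add_right_eq_self _ r).symm
    rw [htrans]
    refine lintegral_mono fun u => ?_
    by_cases hmem : u + r ∈ A
    · rw [Set.indicator_of_mem hmem]
      by_cases humem : u ∈ A
      · rw [Set.indicator_of_mem humem, add_sub_cancel_right]
        exact mul_le_mul' (ENNReal.ofReal_le_ofReal (hlam'_mono (by linarith))) le_rfl
      · rw [add_sub_cancel_right, hζ'_out u humem]
        simp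
    · rw [Set.indicator_of_notMem hmem]
      exact zero_le
  have hmuniv_ne : m Set.univ ≠ ∞ := measure_ne_top m _
  -- the main lintegral chain
  have hnnmeas : Measurable fun p : ℝ × ℝ => (‖ζ' (p.1 - p.2)‖₊ : ℝ≥0∞) := h_unc.enorm
  have hmain : ∫⁻ s in A, ENNReal.ofReal (lam' s * ‖∫ r, ζ' (s - r) ∂m‖ ^ 2) ∂volume
      ≤ m Set.univ * (m Set.univ * L) := by
    have step1 : ∀ s, ENNReal.ofReal (lam' s * ‖∫ r, ζ' (s - r) ∂m‖ ^ 2)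
        ≤ m Set.univ * ∫⁻ r, ENNReal.ofReal (lam' s) * (‖ζ' (s - r)‖₊ : ℝ≥0∞) ^ 2 ∂m := by
      intro s
      have hmeas_r : Measurable fun r => (‖ζ' (s - r)‖₊ : ℝ≥0∞) :=
        (hζ'_sm.comp_measurable (measurable_const.sub measurable_id)).enorm
      calc ENNReal.ofReal (lam' s * ‖∫ r, ζ' (s - r) ∂m‖ ^ 2)
          = ENNReal.ofReal (lam' s) * (‖∫ r, ζ' (s - r) ∂m‖₊ : ℝ≥0∞) ^ 2 := by
            rw [ENNReal.ofReal_mul (hlam'_nonneg s), h_nn]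
        _ ≤ ENNReal.ofReal (lam' s) * (m Set.univ * ∫⁻ r, (‖ζ' (s - r)‖₊ : ℝ≥0∞) ^ 2 ∂m) := by
            refine mul_le_mul' le_rfl ?_
            calc ((‖∫ r, ζ' (s - r) ∂m‖₊ : ℝ≥0∞)) ^ 2
                ≤ (∫⁻ r, (‖ζ' (s - r)‖₊ : ℝ≥0∞) ∂m) ^ 2 := by
                  gcongr
                  exact enorm_integral_le_lintegral_enorm _
              _ ≤ m Set.univ * ∫⁻ r, (‖ζ' (s - r)‖₊ : ℝ≥0∞) ^ 2 ∂m :=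
                  sq_lintegral_le_measure_univ_mul m _ hmeas_r.aemeasurable
        _ = m Set.univ * ∫⁻ r, ENNReal.ofReal (lam' s) * (‖ζ' (s - r)‖₊ : ℝ≥0∞) ^ 2 ∂m := by
            rw [lintegral_const_mul' (ENNReal.ofReal (lam' s)) _ ENNReal.ofReal_ne_top]
            ring
    calc ∫⁻ s in A, ENNReal.ofReal (lam' s * ‖∫ r, ζ' (s - r) ∂m‖ ^ 2) ∂volume
        ≤ ∫⁻ s in A, m Set.univ
            * ∫⁻ r, ENNReal.ofReal (lam' s) * (‖ζ' (s - r)‖₊ : ℝ≥0∞) ^ 2 ∂m ∂volume :=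
          lintegral_mono fun s => step1 s
      _ = m Set.univ * ∫⁻ s in A,
            ∫⁻ r, ENNReal.ofReal (lam' s) * (‖ζ' (s - r)‖₊ : ℝ≥0∞) ^ 2 ∂m ∂volume :=
          lintegral_const_mul' _ _ hmuniv_ne
      _ = m Set.univ * ∫⁻ r,
            ∫⁻ s in A, ENNReal.ofReal (lam' s) * (‖ζ' (s - r)‖₊ : ℝ≥0∞) ^ 2 ∂volume ∂m := by
          congr 1
          apply lintegral_lintegral_swap
          exact (((hlam'_meas.comp measurable_fst).ennreal_ofReal).mul
            (hnnmeas.pow_const 2)).aemeasurable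
      _ ≤ m Set.univ * ∫⁻ _, L ∂m := by
          refine mul_le_mul' le_rfl (lintegral_mono_ae ?_)
          filter_upwards [hm_ae] with r hr
          exact hE r hr.2
      _ = m Set.univ * (m Set.univ * L) := by
          rw [lintegral_const, mul_comm L _]
  -- finiteness of L
  have hζA_int : IntegrableOn (fun s => ‖ζ s‖ ^ 2) A := hζ_int.mono_set hsubset
  have hζ'A_int : IntegrableOn (fun s => ‖ζ' s‖ ^ 2) A := by
    refine hζA_int.congr ?_
    filter_upwards [h1] with u hu
    rw [hu]
  have hLlt : L < ∞ := by
    have hfin2 : ∫⁻ u in A, (‖ζ' u‖₊ : ℝ≥0∞) ^ 2 ∂volume < ∞ := by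
      have heq : ∫⁻ u in A, (‖ζ' u‖₊ : ℝ≥0∞) ^ 2 ∂volume
          = ∫⁻ u in A, ENNReal.ofReal (‖ζ' u‖ ^ 2) ∂volume :=
        lintegral_congr fun u => (h_nn _).symm
      rw [heq]
      exact hζ'A_int.lintegral_lt_top
    calc L ≤ ∫⁻ u in A, ENNReal.ofReal (lam T) * (‖ζ' u‖₊ : ℝ≥0∞) ^ 2 ∂volume :=
          lintegral_mono fun u =>
            mul_le_mul' (ENNReal.ofReal_le_ofReal (hlam'_le u)) le_rfl
      _ = ENNReal.ofReal (lam T) * ∫⁻ u in A, (‖ζ' u‖₊ : ℝ≥0∞) ^ 2 ∂volume :=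
          lintegral_const_mul' _ _ ENNReal.ofReal_ne_top
      _ < ∞ := ENNReal.mul_lt_top ENNReal.ofReal_lt_top hfin2
  -- rewrite the RHS
  have hRHS : ∫ s in A, lam s * ‖ζ s‖ ^ 2 = L.toReal := by
    have e1 : ∫ s in A, lam s * ‖ζ s‖ ^ 2 = ∫ s in A, lam' s * ‖ζ' s‖ ^ 2 := by
      refine integral_congr_ae ?_
      filter_upwards [h1, ae_restrict_mem hAmeas] with u hu humem
      rw [hu, hlam'_eq u humem]
    have e2 : ∫ s in A, lam' s * ‖ζ' s‖ ^ 2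
        = (∫⁻ s in A, ENNReal.ofReal (lam' s * ‖ζ' s‖ ^ 2) ∂volume).toReal := by
      refine integral_eq_lintegral_of_nonneg_ae ?_ ?_
      · exact Filter.Eventually.of_forall fun u => mul_nonneg (hlam'_nonneg u) (sq_nonneg _)
      · exact (hlam'_meas.mul ((hζ'_sm.norm.measurable).pow_const 2)).aestronglyMeasurable
    have e3 : ∫⁻ s in A, ENNReal.ofReal (lam' s * ‖ζ' s‖ ^ 2) ∂volume = L := by
      refine lintegral_congr fun u => ?_
      rw [ENNReal.ofReal_mul (hlam'_nonneg u), h_nn]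
    rw [e1, e2, e3]
  -- rewrite the LHS
  have hLHS : ∫ s in A, lam s * ‖∫ r, ζ (s - r) ∂m‖ ^ 2
      = (∫⁻ s in A, ENNReal.ofReal (lam' s * ‖∫ r, ζ' (s - r) ∂m‖ ^ 2) ∂volume).toReal := by
    have e1 : ∫ s in A, lam s * ‖∫ r, ζ (s - r) ∂m‖ ^ 2
        = ∫ s in A, lam' s * ‖∫ r, ζ' (s - r) ∂m‖ ^ 2 := by
      refine integral_congr_ae ?_
      filter_upwards [hcongr_int, ae_restrict_mem hAmeas] with s hs hsmem
      rw [hs, hlam'_eq s hsmem]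
    rw [e1]
    refine integral_eq_lintegral_of_nonneg_ae ?_ ?_
    · exact Filter.Eventually.of_forall fun s => mul_nonneg (hlam'_nonneg s) (sq_nonneg _)
    · exact (hlam'_meas.mul ((h_avg_sm.norm.measurable).pow_const 2)).aestronglyMeasurable
  -- conclusion
  have hmIcc : m (Set.Icc (-δ) 0) = m Set.univ := by
    refine le_antisymm (measure_mono (Set.subset_univ _)) ?_
    calc m Set.univ = m (Set.Icc (-δ) 0 ∪ (Set.Icc (-δ) 0)ᶜ) := by
          rw [Set.union_compl_self]
      _ ≤ m (Set.Icc (-δ) 0) + m (Set.Icc (-δ) 0)ᶜ := measure_union_le _ _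
      _ = m (Set.Icc (-δ) 0) := by rw [hm, add_zero]
  rw [hLHS, hRHS, hmIcc]
  have hfinprod : m Set.univ * (m Set.univ * L) ≠ ∞ :=
    ENNReal.mul_ne_top hmuniv_ne (ENNReal.mul_ne_top hmuniv_ne hLlt.ne)
  calc (∫⁻ s in A, ENNReal.ofReal (lam' s * ‖∫ r, ζ' (s - r) ∂m‖ ^ 2) ∂volume).toReal
      ≤ (m Set.univ * (m Set.univ * L)).toReal := ENNReal.toReal_mono hfinprod hmain
    _ = (m Set.univ).toReal ^ 2 * L.toReal := by
        rw [ENNReal.toReal_mul, ENNReal.toReal_mul]; ring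
end

section
/- Let E be a real separable Hilbert space, δ > 0, T > 0, and let m be a finite Borel measure on the interval [-δ,0]. Let η : [-δ,T] → E be strongly measurable with ∫_{-δ}^{T} ‖η(s)‖_E² ds < ∞ and with η(s) = 0 for almost every s ∈ [-δ,0); let g : [0,T+δ] → E be strongly measurable with ∫_{0}^{T+δ} ‖g(s)‖_E² ds < ∞ and with g(s) = 0 for almost every s ∈ (T, T+δ]. Then ∫_{0}^{T} ⟨η_δ(t), g(t)⟩_E dt = ∫_{0}^{T} ⟨η(t), g_{δ+}(t)⟩_E dt. -/
open MeasureTheory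
open scoped RealInnerProductSpace ENNReal

/-- Fubini-type null slice lemma. -/
lemma ae_slice_null (m : Measure ℝ) [IsFiniteMeasure m] {N : Set ℝ} (hN : MeasurableSet N)
    (h0 : volume N = 0) (c : ℝ) :
    ∀ᵐ t ∂(volume : Measure ℝ), m {s | t + c * s ∈ N} = 0 := by
  have hker : ∀ t : ℝ, m {s | t + c * s ∈ N} =
      ∫⁻ s, N.indicator (1 : ℝ → ℝ≥0∞) (t + c * s) ∂m := by
    intro t
    have hpre : MeasurableSet ((fun s : ℝ => t + c * s) ⁻¹' N) :=
      (measurable_const.add (measurable_id.const_mul c)) hN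
    have heq : ∀ s : ℝ, N.indicator (1 : ℝ → ℝ≥0∞) (t + c * s)
        = ((fun s : ℝ => t + c * s) ⁻¹' N).indicator (1 : ℝ → ℝ≥0∞) s := by
      intro s
      by_cases hs : t + c * s ∈ N <;>
        simp [Set.indicator_apply, Set.mem_preimage, hs]
    rw [show {s : ℝ | t + c * s ∈ N} = (fun s : ℝ => t + c * s) ⁻¹' N from rfl,
      ← lintegral_indicator_one hpre]
    exact (lintegral_congr heq).symm
  have hmeas : Measurable fun p : ℝ × ℝ => N.indicator (1 : ℝ → ℝ≥0∞) (p.1 + c * p.2) :=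
    (measurable_one.indicator hN).comp (measurable_fst.add (measurable_snd.const_mul c))
  have hz : ∫⁻ t, m {s | t + c * s ∈ N} ∂(volume : Measure ℝ) = 0 := by
    calc ∫⁻ t, m {s | t + c * s ∈ N} ∂(volume : Measure ℝ)
        = ∫⁻ t, ∫⁻ s, N.indicator (1 : ℝ → ℝ≥0∞) (t + c * s) ∂m ∂(volume : Measure ℝ) := by
          exact lintegral_congr hker
      _ = ∫⁻ s, ∫⁻ t, N.indicator (1 : ℝ → ℝ≥0∞) (t + c * s) ∂(volume : Measure ℝ) ∂m :=
          lintegral_lintegral_swap hmeas.aemeasurable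
      _ = 0 := by
          have : ∀ s : ℝ, ∫⁻ t, N.indicator (1 : ℝ → ℝ≥0∞) (t + c * s)
              ∂(volume : Measure ℝ) = 0 := by
            intro s
            have hpre : MeasurableSet ((fun t : ℝ => t + c * s) ⁻¹' N) :=
              (measurable_id.add_const (c * s)) hN
            have heq : ∀ t : ℝ, N.indicator (1 : ℝ → ℝ≥0∞) (t + c * s)
                = ((fun t : ℝ => t + c * s) ⁻¹' N).indicator (1 : ℝ → ℝ≥0∞) t := by
              intro t
              by_cases ht : t + c * s ∈ N <;>
                simp [Set.indicator_apply, Set.mem_preimage, ht]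
            rw [lintegral_congr heq, lintegral_indicator_one hpre,
              measure_preimage_add_right volume (c * s) N, h0]
          rw [lintegral_congr this, lintegral_zero]
  have hmeas2 : Measurable fun t : ℝ => ∫⁻ s, N.indicator (1 : ℝ → ℝ≥0∞) (t + c * s) ∂m :=
    Measurable.lintegral_prod_right' hmeas
  have hz' : ∫⁻ t, ∫⁻ s, N.indicator (1 : ℝ → ℝ≥0∞) (t + c * s) ∂m
      ∂(volume : Measure ℝ) = 0 := by
    rw [← lintegral_congr hker]; exact hz
  have := (lintegral_eq_zero_iff hmeas2).mp hz'
  filter_upwards [this] with t ht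
  rw [hker t]; exact ht


lemma duality_core {E : Type*} [NormedAddCommGroup E] [InnerProductSpace ℝ E] [CompleteSpace E]
    (m : Measure ℝ) [IsFiniteMeasure m] (F G : ℝ → E)
    (hF : StronglyMeasurable F) (hG : StronglyMeasurable G)
    (hF1 : Integrable F (volume : Measure ℝ)) (hG1 : Integrable G (volume : Measure ℝ))
    (hF2 : Integrable (fun t => ‖F t‖ ^ 2) (volume : Measure ℝ))
    (hG2 : Integrable (fun t => ‖G t‖ ^ 2) (volume : Measure ℝ)) :
    ∫ t, ⟪∫ s, F (t + s) ∂m, G t⟫ = ∫ t, ⟪F t, ∫ s, G (t - s) ∂m⟫ := by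
  have hFp : StronglyMeasurable fun p : ℝ × ℝ => F (p.1 + p.2) :=
    hF.comp_measurable (measurable_fst.add measurable_snd)
  have hGp : StronglyMeasurable fun p : ℝ × ℝ => G p.1 :=
    hG.comp_measurable measurable_fst
  have hFp1 : StronglyMeasurable fun p : ℝ × ℝ => F p.1 :=
    hF.comp_measurable measurable_fst
  have hGm : StronglyMeasurable fun p : ℝ × ℝ => G (p.1 - p.2) :=
    hG.comp_measurable (measurable_fst.sub measurable_snd)
  -- integrability of squares on the product
  have hsqF : Integrable (fun p : ℝ × ℝ => ‖F (p.1 + p.2)‖ ^ 2) ((volume : Measure ℝ).prod m) := by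
    have hsm : AEStronglyMeasurable (fun p : ℝ × ℝ => ‖F (p.1 + p.2)‖ ^ 2)
        ((volume : Measure ℝ).prod m) := by
      have := hFp.norm.mul hFp.norm
      simpa [pow_two, Pi.mul_def] using this.aestronglyMeasurable
    rw [integrable_prod_iff' hsm]
    constructor
    · refine Filter.Eventually.of_forall fun s => ?_
      exact hF2.comp_add_right s
    · simp only [norm_pow, norm_norm]
      have heq : ∀ s : ℝ, (∫ t, ‖F (t + s)‖ ^ 2 ∂(volume : Measure ℝ))
          = ∫ t, ‖F t‖ ^ 2 ∂(volume : Measure ℝ) :=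
        fun s => integral_add_right_eq_self (fun t => ‖F t‖ ^ 2) s
      simp only [heq]
      exact integrable_const _
  have hsqGfst : Integrable (fun p : ℝ × ℝ => ‖G p.1‖ ^ 2) ((volume : Measure ℝ).prod m) := by
    have hsm : AEStronglyMeasurable (fun p : ℝ × ℝ => ‖G p.1‖ ^ 2)
        ((volume : Measure ℝ).prod m) := by
      have := hGp.norm.mul hGp.norm
      simpa [pow_two, Pi.mul_def] using this.aestronglyMeasurable
    rw [integrable_prod_iff' hsm]
    refine ⟨Filter.Eventually.of_forall fun s => hG2, ?_⟩
    simp only [norm_pow, norm_norm]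
    exact integrable_const _
  have hsqFfst : Integrable (fun p : ℝ × ℝ => ‖F p.1‖ ^ 2) ((volume : Measure ℝ).prod m) := by
    have hsm : AEStronglyMeasurable (fun p : ℝ × ℝ => ‖F p.1‖ ^ 2)
        ((volume : Measure ℝ).prod m) := by
      have := hFp1.norm.mul hFp1.norm
      simpa [pow_two, Pi.mul_def] using this.aestronglyMeasurable
    rw [integrable_prod_iff' hsm]
    refine ⟨Filter.Eventually.of_forall fun s => hF2, ?_⟩
    simp only [norm_pow, norm_norm]
    exact integrable_const _
  have hsqGm : Integrable (fun p : ℝ × ℝ => ‖G (p.1 - p.2)‖ ^ 2) ((volume : Measure ℝ).prod m) := by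
    have hsm : AEStronglyMeasurable (fun p : ℝ × ℝ => ‖G (p.1 - p.2)‖ ^ 2)
        ((volume : Measure ℝ).prod m) := by
      have := hGm.norm.mul hGm.norm
      simpa [pow_two, Pi.mul_def] using this.aestronglyMeasurable
    rw [integrable_prod_iff' hsm]
    constructor
    · refine Filter.Eventually.of_forall fun s => ?_
      exact hG2.comp_sub_right s
    · simp only [norm_pow, norm_norm]
      have heq : ∀ s : ℝ, (∫ t, ‖G (t - s)‖ ^ 2 ∂(volume : Measure ℝ))
          = ∫ t, ‖G t‖ ^ 2 ∂(volume : Measure ℝ) := by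
        intro s
        have := integral_add_right_eq_self (μ := (volume : Measure ℝ)) (fun t => ‖G t‖ ^ 2) (-s)
        simpa [sub_eq_add_neg] using this
      simp only [heq]
      exact integrable_const _
  -- integrability of the inner-product integrands on the product
  have P1 : Integrable (fun p : ℝ × ℝ => (⟪F (p.1 + p.2), G p.1⟫ : ℝ))
      ((volume : Measure ℝ).prod m) := by
    refine Integrable.mono' (hsqF.add hsqGfst) (hFp.inner hGp).aestronglyMeasurable ?_
    refine Filter.Eventually.of_forall fun p => ?_
    have h1 : ‖(⟪F (p.1 + p.2), G p.1⟫ : ℝ)‖ ≤ ‖F (p.1 + p.2)‖ * ‖G p.1‖ :=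
      norm_inner_le_norm _ _
    show ‖(⟪F (p.1 + p.2), G p.1⟫ : ℝ)‖ ≤ ‖F (p.1 + p.2)‖ ^ 2 + ‖G p.1‖ ^ 2
    nlinarith [norm_nonneg (F (p.1 + p.2)), norm_nonneg (G p.1),
      sq_nonneg (‖F (p.1 + p.2)‖ - ‖G p.1‖)]
  have P2 : Integrable (fun p : ℝ × ℝ => (⟪F p.1, G (p.1 - p.2)⟫ : ℝ))
      ((volume : Measure ℝ).prod m) := by
    refine Integrable.mono' (hsqFfst.add hsqGm) (hFp1.inner hGm).aestronglyMeasurable ?_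
    refine Filter.Eventually.of_forall fun p => ?_
    have h1 : ‖(⟪F p.1, G (p.1 - p.2)⟫ : ℝ)‖ ≤ ‖F p.1‖ * ‖G (p.1 - p.2)‖ :=
      norm_inner_le_norm _ _
    show ‖(⟪F p.1, G (p.1 - p.2)⟫ : ℝ)‖ ≤ ‖F p.1‖ ^ 2 + ‖G (p.1 - p.2)‖ ^ 2
    nlinarith [norm_nonneg (F p.1), norm_nonneg (G (p.1 - p.2)),
      sq_nonneg (‖F p.1‖ - ‖G (p.1 - p.2)‖)]
  -- integrability of the vector-valued sections
  have QF : Integrable (fun p : ℝ × ℝ => F (p.1 + p.2)) ((volume : Measure ℝ).prod m) := by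
    rw [integrable_prod_iff' hFp.aestronglyMeasurable]
    constructor
    · exact Filter.Eventually.of_forall fun s => hF1.comp_add_right s
    · have heq : ∀ s : ℝ, (∫ t, ‖F (t + s)‖ ∂(volume : Measure ℝ))
          = ∫ t, ‖F t‖ ∂(volume : Measure ℝ) :=
        fun s => integral_add_right_eq_self (fun t => ‖F t‖) s
      simp only [heq]
      exact integrable_const _
  have QG : Integrable (fun p : ℝ × ℝ => G (p.1 - p.2)) ((volume : Measure ℝ).prod m) := by
    rw [integrable_prod_iff' hGm.aestronglyMeasurable]
    constructor
    · exact Filter.Eventually.of_forall fun s => hG1.comp_sub_right s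
    · have heq : ∀ s : ℝ, (∫ t, ‖G (t - s)‖ ∂(volume : Measure ℝ))
          = ∫ t, ‖G t‖ ∂(volume : Measure ℝ) := by
        intro s
        have := integral_add_right_eq_self (μ := (volume : Measure ℝ)) (fun t => ‖G t‖) (-s)
        simpa [sub_eq_add_neg] using this
      simp only [heq]
      exact integrable_const _
  -- main chain
  calc ∫ t, ⟪∫ s, F (t + s) ∂m, G t⟫
      = ∫ t, ∫ s, (⟪F (t + s), G t⟫ : ℝ) ∂m := by
        refine integral_congr_ae ?_
        filter_upwards [QF.prod_right_ae] with t ht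
        rw [real_inner_comm, ← integral_inner ht (G t)]
        exact integral_congr_ae (Filter.Eventually.of_forall fun s => real_inner_comm _ _)
    _ = ∫ s, ∫ t, (⟪F (t + s), G t⟫ : ℝ) ∂(volume : Measure ℝ) ∂m :=
        integral_integral_swap P1
    _ = ∫ s, ∫ t, (⟪F t, G (t - s)⟫ : ℝ) ∂(volume : Measure ℝ) ∂m := by
        refine integral_congr_ae (Filter.Eventually.of_forall fun s => ?_)
        show (∫ t, (⟪F (t + s), G t⟫ : ℝ) ∂(volume : Measure ℝ))
            = ∫ t, (⟪F t, G (t - s)⟫ : ℝ) ∂(volume : Measure ℝ)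
        have := integral_add_right_eq_self (μ := (volume : Measure ℝ))
          (fun t => (⟪F t, G (t - s)⟫ : ℝ)) s
        simpa [add_sub_cancel_right] using this
    _ = ∫ t, ∫ s, (⟪F t, G (t - s)⟫ : ℝ) ∂m ∂(volume : Measure ℝ) :=
        (integral_integral_swap P2).symm
    _ = ∫ t, ⟪F t, ∫ s, G (t - s) ∂m⟫ := by
        refine integral_congr_ae ?_
        filter_upwards [QG.prod_right_ae] with t ht
        exact integral_inner ht (F t)

/-- deterministic core of the duality Lemma 4.4. For a finite Borel measure
`m` supported on `[-δ, 0]`, an `L²` function `η` on `[-δ, T]` vanishing a.e. before `0`, and an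
`L²` function `g` on `[0, T+δ]` vanishing a.e. after `T`, one has
`∫_0^T ⟨η_δ(t), g(t)⟩ dt = ∫_0^T ⟨η(t), g_{δ+}(t)⟩ dt`, where
`η_δ(t) = ∫ η(t+s) m(ds)` and `g_{δ+}(t) = ∫ g(t-s) m(ds)`. -/
theorem delay_anticipation_duality
    {E : Type*} [NormedAddCommGroup E] [InnerProductSpace ℝ E] [CompleteSpace E]
    [TopologicalSpace.SeparableSpace E]
    (δ T : ℝ) (hδ : 0 < δ) (hT : 0 < T)
    (m : Measure ℝ) [IsFiniteMeasure m] (hm : m (Set.Icc (-δ) 0)ᶜ = 0)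
    (η : ℝ → E)
    (hη_meas : AEStronglyMeasurable η (volume.restrict (Set.Icc (-δ) T)))
    (hη_int : IntegrableOn (fun s => ‖η s‖ ^ 2) (Set.Icc (-δ) T))
    (hη_zero : ∀ᵐ s ∂(volume.restrict (Set.Ico (-δ) 0)), η s = 0)
    (g : ℝ → E)
    (hg_meas : AEStronglyMeasurable g (volume.restrict (Set.Icc 0 (T + δ))))
    (hg_int : IntegrableOn (fun s => ‖g s‖ ^ 2) (Set.Icc 0 (T + δ)))
    (hg_zero : ∀ᵐ s ∂(volume.restrict (Set.Ioc T (T + δ))), g s = 0) :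
    ∫ t in Set.Icc 0 T, ⟪∫ s, η (t + s) ∂m, g t⟫
      = ∫ t in Set.Icc 0 T, ⟪η t, ∫ s, g (t - s) ∂m⟫ := by
    classical
  set η' : ℝ → E := hη_meas.mk η with hη'def
  set g' : ℝ → E := hg_meas.mk g with hg'def
  set F : ℝ → E := (Set.Icc (0:ℝ) T).indicator η' with hFdef
  set G : ℝ → E := (Set.Icc (0:ℝ) T).indicator g' with hGdef
  have hF_sm : StronglyMeasurable F :=
    (hη_meas.stronglyMeasurable_mk).indicator measurableSet_Icc
  have hG_sm : StronglyMeasurable G :=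
    (hg_meas.stronglyMeasurable_mk).indicator measurableSet_Icc
  have hsub1 : Set.Icc (0:ℝ) T ⊆ Set.Icc (-δ) T := Set.Icc_subset_Icc (by linarith) le_rfl
  have hsub2 : Set.Icc (0:ℝ) T ⊆ Set.Icc 0 (T + δ) := Set.Icc_subset_Icc le_rfl (by linarith)
  -- Claim A : η agrees a.e. with F on [-δ, T]
  have hA : ∀ᵐ x ∂(volume.restrict (Set.Icc (-δ) T)), η x = F x := by
    have h1 : ∀ᵐ x ∂(volume : Measure ℝ), x ∈ Set.Icc (-δ) T → η x = η' x :=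
      (ae_restrict_iff' measurableSet_Icc).mp hη_meas.ae_eq_mk
    have h2 : ∀ᵐ x ∂(volume : Measure ℝ), x ∈ Set.Ico (-δ) 0 → η x = 0 :=
      (ae_restrict_iff' measurableSet_Ico).mp hη_zero
    rw [ae_restrict_iff' measurableSet_Icc]
    filter_upwards [h1, h2] with x h1x h2x hx
    by_cases hx0 : 0 ≤ x
    · have hxI : x ∈ Set.Icc (0:ℝ) T := ⟨hx0, hx.2⟩
      rw [hFdef, Set.indicator_of_mem hxI, h1x hx]
    · have hxI : x ∉ Set.Icc (0:ℝ) T := fun h => hx0 h.1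
      rw [hFdef, Set.indicator_of_notMem hxI, h2x ⟨hx.1, lt_of_not_ge hx0⟩]
  -- Claim A' : g agrees a.e. with G on [0, T+δ]
  have hB : ∀ᵐ x ∂(volume.restrict (Set.Icc 0 (T + δ))), g x = G x := by
    have h1 : ∀ᵐ x ∂(volume : Measure ℝ), x ∈ Set.Icc 0 (T + δ) → g x = g' x :=
      (ae_restrict_iff' measurableSet_Icc).mp hg_meas.ae_eq_mk
    have h2 : ∀ᵐ x ∂(volume : Measure ℝ), x ∈ Set.Ioc T (T + δ) → g x = 0 :=
      (ae_restrict_iff' measurableSet_Ioc).mp hg_zero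
    rw [ae_restrict_iff' measurableSet_Icc]
    filter_upwards [h1, h2] with x h1x h2x hx
    by_cases hx0 : x ≤ T
    · have hxI : x ∈ Set.Icc (0:ℝ) T := ⟨hx.1, hx0⟩
      rw [hGdef, Set.indicator_of_mem hxI, h1x hx]
    · have hxI : x ∉ Set.Icc (0:ℝ) T := fun h => hx0 h.2
      rw [hGdef, Set.indicator_of_notMem hxI, h2x ⟨lt_of_not_ge hx0, hx.2⟩]
  -- measurable null supersets of the exceptional sets
  have hA' : ∀ᵐ x ∂(volume : Measure ℝ), x ∈ Set.Icc (-δ) T → η x = F x :=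
    (ae_restrict_iff' measurableSet_Icc).mp hA
  have hB' : ∀ᵐ x ∂(volume : Measure ℝ), x ∈ Set.Icc 0 (T + δ) → g x = G x :=
    (ae_restrict_iff' measurableSet_Icc).mp hB
  set S₁ : Set ℝ := {x | ¬ (x ∈ Set.Icc (-δ) T → η x = F x)} with hS₁def
  set S₂ : Set ℝ := {x | ¬ (x ∈ Set.Icc 0 (T + δ) → g x = G x)} with hS₂def
  have hS₁ : volume S₁ = 0 := hA'
  have hS₂ : volume S₂ = 0 := hB'
  set N₁ : Set ℝ := toMeasurable volume S₁ with hN₁def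
  set N₂ : Set ℝ := toMeasurable volume S₂ with hN₂def
  have hN₁m : MeasurableSet N₁ := measurableSet_toMeasurable _ _
  have hN₂m : MeasurableSet N₂ := measurableSet_toMeasurable _ _
  have hN₁0 : volume N₁ = 0 := by rw [hN₁def, measure_toMeasurable]; exact hS₁
  have hN₂0 : volume N₂ = 0 := by rw [hN₂def, measure_toMeasurable]; exact hS₂
  have hN₁prop : ∀ x : ℝ, x ∉ N₁ → x ∈ Set.Icc (-δ) T → η x = F x := by
    intro x hx hxI
    by_contra h
    exact hx (subset_toMeasurable _ _
      (show ¬(x ∈ Set.Icc (-δ) T → η x = F x) from fun him => h (him hxI)))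
  have hN₂prop : ∀ x : ℝ, x ∉ N₂ → x ∈ Set.Icc 0 (T + δ) → g x = G x := by
    intro x hx hxI
    by_contra h
    exact hx (subset_toMeasurable _ _
      (show ¬(x ∈ Set.Icc 0 (T + δ) → g x = G x) from fun him => h (him hxI)))
  -- m-a.e. s lies in [-δ, 0]
  have hmae : ∀ᵐ s ∂m, s ∈ Set.Icc (-δ) 0 := by
    have hc : {s : ℝ | ¬ s ∈ Set.Icc (-δ) 0} = (Set.Icc (-δ) 0)ᶜ := rfl
    rw [ae_iff, hc]; exact hm
  -- slice lemmas
  have hsl1 := ae_slice_null m hN₁m hN₁0 1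
  have hsl2 := ae_slice_null m hN₂m hN₂0 (-1)
  -- Claim B : the delayed averages agree a.e. on [0, T]
  have hBη : ∀ᵐ t ∂(volume.restrict (Set.Icc (0:ℝ) T)),
      (∫ s, η (t + s) ∂m) = ∫ s, F (t + s) ∂m := by
    rw [ae_restrict_iff' measurableSet_Icc]
    filter_upwards [hsl1] with t ht htI
    refine integral_congr_ae ?_
    have hns : ∀ᵐ s ∂m, s ∉ {s : ℝ | t + 1 * s ∈ N₁} := by
      rw [ae_iff]; simpa using ht
    filter_upwards [hmae, hns] with s hs hn
    have hx : t + s ∈ Set.Icc (-δ) T :=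
      ⟨by linarith [hs.1, htI.1], by linarith [hs.2, htI.2]⟩
    have hnn : t + s ∉ N₁ := by simpa using hn
    exact hN₁prop _ hnn hx
  have hBg : ∀ᵐ t ∂(volume.restrict (Set.Icc (0:ℝ) T)),
      (∫ s, g (t - s) ∂m) = ∫ s, G (t - s) ∂m := by
    rw [ae_restrict_iff' measurableSet_Icc]
    filter_upwards [hsl2] with t ht htI
    refine integral_congr_ae ?_
    have hns : ∀ᵐ s ∂m, s ∉ {s : ℝ | t + (-1) * s ∈ N₂} := by
      rw [ae_iff]; simpa using ht
    filter_upwards [hmae, hns] with s hs hn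
    have hx : t - s ∈ Set.Icc 0 (T + δ) :=
      ⟨by linarith [hs.2, htI.1], by linarith [hs.1, htI.2]⟩
    have hnn : t - s ∉ N₂ := by
      simpa [neg_mul, one_mul, ← sub_eq_add_neg] using hn
    exact hN₂prop _ hnn hx
  -- integrability of F and G
  have hF2 : Integrable (fun t => ‖F t‖ ^ 2) (volume : Measure ℝ) := by
    have heq : (fun t => ‖F t‖ ^ 2)
        = (Set.Icc (0:ℝ) T).indicator (fun t => ‖η' t‖ ^ 2) := by
      funext x
      by_cases hx : x ∈ Set.Icc (0:ℝ) T <;>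
        simp [hFdef, Set.indicator_of_mem, Set.indicator_of_notMem, hx]
    rw [heq, integrable_indicator_iff measurableSet_Icc]
    have h0 : IntegrableOn (fun s => ‖η s‖ ^ 2) (Set.Icc (0:ℝ) T) := hη_int.mono_set hsub1
    refine h0.congr ?_
    have := ae_restrict_of_ae_restrict_of_subset hsub1 hη_meas.ae_eq_mk
    filter_upwards [this] with x hx
    rw [hx]
  have hG2 : Integrable (fun t => ‖G t‖ ^ 2) (volume : Measure ℝ) := by
    have heq : (fun t => ‖G t‖ ^ 2)
        = (Set.Icc (0:ℝ) T).indicator (fun t => ‖g' t‖ ^ 2) := by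
      funext x
      by_cases hx : x ∈ Set.Icc (0:ℝ) T <;>
        simp [hGdef, Set.indicator_of_mem, Set.indicator_of_notMem, hx]
    rw [heq, integrable_indicator_iff measurableSet_Icc]
    have h0 : IntegrableOn (fun s => ‖g s‖ ^ 2) (Set.Icc (0:ℝ) T) := hg_int.mono_set hsub2
    refine h0.congr ?_
    have := ae_restrict_of_ae_restrict_of_subset hsub2 hg_meas.ae_eq_mk
    filter_upwards [this] with x hx
    rw [hx]
  have hIndOne : Integrable ((Set.Icc (0:ℝ) T).indicator (fun _ => (1:ℝ))) (volume : Measure ℝ) := by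
    rw [integrable_indicator_iff measurableSet_Icc]
    exact integrableOn_const measure_Icc_lt_top.ne
  have hF1 : Integrable F (volume : Measure ℝ) := by
    refine Integrable.mono' (hF2.add hIndOne) hF_sm.aestronglyMeasurable ?_
    refine Filter.Eventually.of_forall fun x => ?_
    show ‖F x‖ ≤ ‖F x‖ ^ 2 + (Set.Icc (0:ℝ) T).indicator (fun _ => (1:ℝ)) x
    by_cases hx : x ∈ Set.Icc (0:ℝ) T
    · rw [Set.indicator_of_mem hx]
      nlinarith [norm_nonneg (F x), sq_nonneg (‖F x‖ - 1)]
    · rw [Set.indicator_of_notMem hx]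
      have : F x = 0 := Set.indicator_of_notMem hx _
      simp [this]
  have hG1 : Integrable G (volume : Measure ℝ) := by
    refine Integrable.mono' (hG2.add hIndOne) hG_sm.aestronglyMeasurable ?_
    refine Filter.Eventually.of_forall fun x => ?_
    show ‖G x‖ ≤ ‖G x‖ ^ 2 + (Set.Icc (0:ℝ) T).indicator (fun _ => (1:ℝ)) x
    by_cases hx : x ∈ Set.Icc (0:ℝ) T
    · rw [Set.indicator_of_mem hx]
      nlinarith [norm_nonneg (G x), sq_nonneg (‖G x‖ - 1)]
    · rw [Set.indicator_of_notMem hx]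
      have : G x = 0 := Set.indicator_of_notMem hx _
      simp [this]
  -- vanishing outside [0, T]
  have hFz : ∀ x : ℝ, x ∉ Set.Icc (0:ℝ) T → F x = 0 := fun x hx =>
    Set.indicator_of_notMem hx _
  have hGz : ∀ x : ℝ, x ∉ Set.Icc (0:ℝ) T → G x = 0 := fun x hx =>
    Set.indicator_of_notMem hx _
  -- final chain
  calc ∫ t in Set.Icc 0 T, ⟪∫ s, η (t + s) ∂m, g t⟫
      = ∫ t in Set.Icc 0 T, ⟪∫ s, F (t + s) ∂m, G t⟫ := by
        refine integral_congr_ae ?_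
        filter_upwards [hBη, ae_restrict_of_ae_restrict_of_subset hsub2 hB] with t h1 h2
        rw [h1, h2]
    _ = ∫ t, ⟪∫ s, F (t + s) ∂m, G t⟫ :=
        setIntegral_eq_integral_of_forall_compl_eq_zero fun t ht => by
          rw [hGz t ht, inner_zero_right]
    _ = ∫ t, ⟪F t, ∫ s, G (t - s) ∂m⟫ :=
        duality_core m F G hF_sm hG_sm hF1 hG1 hF2 hG2
    _ = ∫ t in Set.Icc 0 T, ⟪F t, ∫ s, G (t - s) ∂m⟫ :=
        (setIntegral_eq_integral_of_forall_compl_eq_zero fun t ht => by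
          rw [hFz t ht, inner_zero_left]).symm
    _ = ∫ t in Set.Icc 0 T, ⟪η t, ∫ s, g (t - s) ∂m⟫ := by
        refine integral_congr_ae ?_
        filter_upwards [hBg, ae_restrict_of_ae_restrict_of_subset hsub1 hA] with t h1 h2
        rw [h1, h2]
end
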